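/- arXiv:2009.11817 — 5 statements merged into one kernel-verified Lean document; each statement's English description precedes it below -/
import Mathlib

section
/- Let V be a finite set of sites, d ≥ 2 a local dimension, and Φ a potential on V with ‖Φ(X)‖ ≤ h for all X ⊆ V (h > 0). Let β, δ ≥ 0 and let z : 𝒫(V) → ℂ satisfy |z_X − β| ≤ δ for all X ⊆ V. Then for every connected set 𝒳, the series defining W_z(𝒳) converges absolutely and |W_z(𝒳)| ≤ d^{|supp(𝒳)|}·(e^{(δ+β)·h} − 1)^{|𝒳|}. -/
open scoped Matrix.Norms.L2Operator ComplexOrder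

section WzAux

lemma Wz.entry_le_l2 {m n : Type*} [Fintype m] [Fintype n] [DecidableEq n]
    (A : Matrix m n ℂ) (i : m) (j : n) : ‖A i j‖ ≤ ‖A‖ := by
  have h1 := A.l2_opNorm_mulVec (EuclideanSpace.single j (1:ℂ))
  rw [EuclideanSpace.norm_single, norm_one, mul_one] at h1
  set v := (EuclideanSpace.equiv m ℂ).symm (A.mulVec (EuclideanSpace.single j (1:ℂ))) with hv
  have h2 : ‖v i‖ ≤ ‖v‖ := by
    rw [EuclideanSpace.norm_eq]
    rcases le_or_gt ‖v i‖ 0 with h | h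
    · exact h.trans (Real.sqrt_nonneg _)
    · refine (Real.le_sqrt' h).mpr ?_
      exact Finset.single_le_sum (f := fun k => ‖v k‖ ^ 2) (fun k _ => by positivity)
        (Finset.mem_univ i)
  have h3 : v i = A i j := by
    show (A.mulVec (EuclideanSpace.single j (1:ℂ))) i = A i j
    have : (EuclideanSpace.single j (1:ℂ)) = (Pi.single j (1:ℂ) : n → ℂ) := rfl
    rw [this, Matrix.mulVec_single]; simp
  rw [← h3]
  exact h2.trans h1

def Wz.cnt (V : Type*) [Fintype V] [DecidableEq V] (p : ℕ) (S : Finset (Finset V)) : ℕ :=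
  (Finset.univ.filter (fun f : Fin p → Finset V => Finset.image f Finset.univ = S)).card

variable {V : Type*} [Fintype V] [DecidableEq V]

lemma Wz.cnt_sum (p : ℕ) (S : Finset (Finset V)) :
    ∑ T ∈ S.powerset, Wz.cnt V p T = S.card ^ p := by
  classical
  have hcard : (Finset.univ.filter
      (fun f : Fin p → Finset V => Finset.image f Finset.univ ⊆ S)).card = S.card ^ p := by
    have hA : (Finset.univ.filter
        (fun f : Fin p → Finset V => Finset.image f Finset.univ ⊆ S))
        = Fintype.piFinset (fun _ : Fin p => S) := by
      ext f
      simp [Fintype.mem_piFinset, Finset.image_subset_iff]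
    rw [hA, Fintype.card_piFinset]
    simp
  rw [← hcard]
  rw [Finset.card_eq_sum_card_fiberwise
    (f := fun f : Fin p → Finset V => Finset.image f Finset.univ) (t := S.powerset)
    (fun f hf => Finset.mem_powerset.mpr (Finset.mem_filter.mp hf).2)]
  refine Finset.sum_congr rfl (fun T hT => congrArg Finset.card ?_)
  ext f
  simp only [Finset.mem_filter, Finset.mem_univ, true_and]
  exact ⟨fun hh => ⟨hh ▸ Finset.mem_powerset.mp hT, hh⟩, fun hh => hh.2⟩

lemma Wz.sum_powerset_pow {γ : Type*} [DecidableEq γ] (x : ℝ) (S : Finset γ) :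
    ∑ T ∈ S.powerset, x ^ T.card = (x + 1) ^ S.card := by
  induction S using Finset.induction_on with
  | empty => simp
  | @insert a s ha ih =>
    rw [Finset.sum_powerset_insert ha, ih, Finset.card_insert_of_notMem ha]
    have : ∀ T ∈ s.powerset, x ^ (insert a T).card = x * x ^ T.card := by
      intro T hT
      rw [Finset.card_insert_of_notMem (fun hc => ha (Finset.mem_powerset.mp hT hc))]
      ring
    rw [Finset.sum_congr rfl this, ← Finset.mul_sum, ih]
    ring

lemma Wz.cnt_le (p : ℕ) (S : Finset (Finset V)) : Wz.cnt V p S ≤ S.card ^ p := by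
  rw [← Wz.cnt_sum p S]
  exact Finset.single_le_sum (f := fun T => Wz.cnt V p T) (fun T _ => Nat.zero_le _)
    (Finset.mem_powerset.mpr Finset.Subset.rfl)

lemma Wz.cnt_summable {t : ℝ} (ht : 0 ≤ t) (S : Finset (Finset V)) :
    Summable (fun p : ℕ => (Wz.cnt V p S : ℝ) * t ^ p / p.factorial) := by
  refine Summable.of_nonneg_of_le (fun p => by positivity)
    (fun p => ?_) (Real.summable_pow_div_factorial ((S.card : ℝ) * t))
  rw [mul_pow]
  gcongr
  exact_mod_cast Wz.cnt_le p S

lemma Wz.cnt_tsum {t : ℝ} (ht : 0 ≤ t) (S : Finset (Finset V)) :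
    ∑' p : ℕ, (Wz.cnt V p S : ℝ) * t ^ p / p.factorial = (Real.exp t - 1) ^ S.card := by
  induction S using Finset.strongInduction with
  | _ S IH =>
    have key : ∑ T ∈ S.powerset, ∑' p : ℕ, (Wz.cnt V p T : ℝ) * t ^ p / p.factorial
        = Real.exp (S.card * t) := by
      rw [← Summable.tsum_finsetSum (fun T _ => Wz.cnt_summable ht T)]
      have : ∀ p : ℕ, ∑ T ∈ S.powerset, (Wz.cnt V p T : ℝ) * t ^ p / p.factorial
          = ((S.card : ℝ) * t) ^ p / p.factorial := by
        intro p
        rw [← Finset.sum_div, ← Finset.sum_mul, mul_pow]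
        norm_cast
        rw [Wz.cnt_sum p S]
      rw [tsum_congr this, Real.exp_eq_exp_ℝ, NormedSpace.exp_eq_tsum_div]
    have hS : S ∈ S.powerset := Finset.mem_powerset.mpr Finset.Subset.rfl
    have split := Finset.add_sum_erase S.powerset
      (fun T => ∑' p : ℕ, (Wz.cnt V p T : ℝ) * t ^ p / p.factorial) hS
    have herase : ∑ T ∈ S.powerset.erase S, ∑' p : ℕ, (Wz.cnt V p T : ℝ) * t ^ p / p.factorial
        = ∑ T ∈ S.powerset.erase S, (Real.exp t - 1) ^ T.card := by
      refine Finset.sum_congr rfl (fun T hT => ?_)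
      have h1 := Finset.mem_erase.mp hT
      exact IH T (lt_of_le_of_ne (Finset.mem_powerset.mp h1.2) h1.1)
    have hpow : ∑ T ∈ S.powerset, (Real.exp t - 1) ^ T.card = Real.exp (S.card * t) := by
      rw [Wz.sum_powerset_pow, sub_add_cancel, ← Real.exp_nat_mul]
    have split2 := Finset.add_sum_erase S.powerset
      (fun T => (Real.exp t - 1) ^ T.card) hS
    have : ∑' p : ℕ, (Wz.cnt V p S : ℝ) * t ^ p / p.factorial
        = Real.exp (S.card * t) - ∑ T ∈ S.powerset.erase S, (Real.exp t - 1) ^ T.card := by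
      rw [← herase, ← key, ← split]; ring
    rw [this, ← hpow, ← split2]; ring

end WzAux
/-- An operator on `⊗_{x ∈ V} ℂ^d` (a matrix indexed by functions `V → Fin d`) is supported
on `X ⊆ V` if its entries vanish whenever the row and column indices differ outside `X`, and
depend only on the restrictions of the indices to `X`. -/
def SupportedOn {V : Type*} {d : ℕ} (M : Matrix (V → Fin d) (V → Fin d) ℂ)
    (X : Finset V) : Prop :=
  (∀ f g : V → Fin d, (∃ x, x ∉ X ∧ f x ≠ g x) → M f g = 0) ∧
  (∀ f g f' g' : V → Fin d, (∀ x ∈ X, f x = f' x) → (∀ x ∈ X, g x = g' x) →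
    (∀ x, x ∉ X → f x = g x) → (∀ x, x ∉ X → f' x = g' x) → M f g = M f' g')

/-- The overlap graph of a collection `𝒳` of finite sets: vertices are the members of `𝒳`,
and edges join distinct members that intersect. -/
def overlapGraph {V : Type*} [DecidableEq V] (𝒳 : Finset (Finset V)) :
    SimpleGraph {X : Finset V // X ∈ 𝒳} where
  Adj A B := A ≠ B ∧ (A.1 ∩ B.1).Nonempty
  symm := by
    constructor
    intro A B hAB
    exact ⟨hAB.1.symm, by rw [Finset.inter_comm]; exact hAB.2⟩
  loopless := by
    constructor
    intro A hA
    exact hA.1 rfl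

/-- A connected set for the potential `Φ`: a nonempty collection `𝒳` of subsets `X` with
`Φ(X) ≠ 0` whose overlap graph is connected. -/
def IsConnectedSet {V : Type*} [Fintype V] [DecidableEq V] {d : ℕ}
    (Φ : Finset V → Matrix (V → Fin d) (V → Fin d) ℂ) (𝒳 : Finset (Finset V)) : Prop :=
  𝒳.Nonempty ∧ (∀ X ∈ 𝒳, Φ X ≠ 0) ∧ (overlapGraph 𝒳).Connected

/-- The `p`-th term of the series defining `W_z(𝒳)`:
`(1/p!) Σ_{(X₁,…,X_p)} Tr_{supp 𝒳}[Π_j (-z_{X_j} Φ(X_j))]`, where the sum runs over all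
sequences of members of `𝒳` whose set of entries is all of `𝒳`, the matrix product is taken
in the order `j = 1, …, p`, and `Tr_{supp 𝒳}[M] = d^{-|V ∖ supp 𝒳|} Tr[M]` is the subsystem
trace. -/
noncomputable def Wterm {V : Type*} [Fintype V] [DecidableEq V] {d : ℕ}
    (Φ : Finset V → Matrix (V → Fin d) (V → Fin d) ℂ) (z : Finset V → ℂ)
    (𝒳 : Finset (Finset V)) (p : ℕ) : ℂ :=
  (p.factorial : ℂ)⁻¹ *
    ∑ f ∈ Finset.univ.filter (fun f : Fin p → Finset V => Finset.image f Finset.univ = 𝒳),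
      ((d : ℂ) ^ (Fintype.card V - (𝒳.biUnion id).card))⁻¹ *
        Matrix.trace (List.ofFn (fun j : Fin p => (-(z (f j))) • Φ (f j))).prod

/-- For a potential with `‖Φ(X)‖ ≤ h` and complex parameters `z` with
`|z_X - β| ≤ δ`, for every connected set `𝒳` the series defining `W_z(𝒳)` converges
absolutely and `|W_z(𝒳)| ≤ d^{|supp 𝒳|} (e^{(δ+β)h} - 1)^{|𝒳|}`. -/
theorem Wz_summable_and_bound {V : Type*} [Fintype V] [DecidableEq V] {d : ℕ} (hd : 2 ≤ d)
    (Φ : Finset V → Matrix (V → Fin d) (V → Fin d) ℂ)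
    (hherm : ∀ X, (Φ X).IsHermitian) (hsupp : ∀ X, SupportedOn (Φ X) X)
    (h : ℝ) (hh : 0 < h) (hnorm : ∀ X, ‖Φ X‖ ≤ h)
    (β δ : ℝ) (hβ : 0 ≤ β) (hδ : 0 ≤ δ)
    (z : Finset V → ℂ) (hz : ∀ X, ‖z X - β‖ ≤ δ)
    (𝒳 : Finset (Finset V)) (h𝒳 : IsConnectedSet Φ 𝒳) :
    Summable (fun p : ℕ => ‖Wterm Φ z 𝒳 p‖) ∧
    ‖∑' p : ℕ, Wterm Φ z 𝒳 p‖ ≤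
      (d : ℝ) ^ ((𝒳.biUnion id).card) * (Real.exp ((δ + β) * h) - 1) ^ 𝒳.card := by

  classical
  obtain ⟨hne, -, -⟩ := h𝒳
  set m := (𝒳.biUnion id).card with hm
  set t := (δ + β) * h with htdef
  have ht : 0 ≤ t := by positivity
  have hmle : m ≤ Fintype.card V := Finset.card_le_univ _
  have hzb : ∀ X, ‖z X‖ ≤ δ + β := by
    intro X
    calc ‖z X‖ = ‖(z X - β) + β‖ := by ring_nf
    _ ≤ ‖z X - β‖ + ‖(β:ℂ)‖ := norm_add_le _ _
    _ ≤ δ + β := by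
        rw [Complex.norm_real, Real.norm_of_nonneg hβ]
        exact add_le_add_left (hz X) β
  have hfac : ∀ X : Finset V, ‖(-(z X)) • Φ X‖ ≤ t := by
    intro X
    rw [norm_smul, norm_neg]
    calc ‖z X‖ * ‖Φ X‖ ≤ (δ + β) * h := by
          refine mul_le_mul ?_ (hnorm X) (norm_nonneg _) (by positivity)
          exact hzb X
    _ = t := rfl
  have hprod : ∀ p : ℕ, 0 < p → ∀ f : Fin p → Finset V,
      ‖(List.ofFn (fun j : Fin p => (-(z (f j))) • Φ (f j))).prod‖ ≤ t ^ p := by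
    intro p hp f
    have hnil : List.ofFn (fun j : Fin p => (-(z (f j))) • Φ (f j)) ≠ [] := by
      rw [Ne, List.ofFn_eq_nil_iff]
      omega
    refine (List.norm_prod_le' hnil).trans ?_
    rw [List.map_ofFn]
    rw [List.prod_ofFn]
    calc ∏ j : Fin p, ‖(-(z (f j))) • Φ (f j)‖ ≤ ∏ _j : Fin p, t :=
          Finset.prod_le_prod (fun j _ => norm_nonneg _) (fun j _ => hfac (f j))
    _ = t ^ p := by simp
  have htrace : ∀ M : Matrix (V → Fin d) (V → Fin d) ℂ,
      ‖Matrix.trace M‖ ≤ (d:ℝ) ^ Fintype.card V * ‖M‖ := by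
    intro M
    calc ‖Matrix.trace M‖ ≤ ∑ i, ‖M i i‖ := norm_sum_le _ _
    _ ≤ ∑ _i : (V → Fin d), ‖M‖ := Finset.sum_le_sum (fun i _ => Wz.entry_le_l2 M i i)
    _ = (Fintype.card (V → Fin d) : ℝ) * ‖M‖ := by
        rw [Finset.sum_const, nsmul_eq_mul, Finset.card_univ]
    _ = (d:ℝ) ^ Fintype.card V * ‖M‖ := by
        rw [Fintype.card_fun, Fintype.card_fin]
        push_cast
        ring
  have hdm : ((d:ℝ) ^ (Fintype.card V - m))⁻¹ * (d:ℝ) ^ Fintype.card V = (d:ℝ) ^ m := by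
    have hd0 : (0:ℝ) < (d:ℝ) := by
      have : 0 < d := by omega
      exact_mod_cast this
    have hsplit : (d:ℝ) ^ Fintype.card V = (d:ℝ) ^ (Fintype.card V - m) * (d:ℝ) ^ m := by
      rw [← pow_add, Nat.sub_add_cancel hmle]
    rw [hsplit, inv_mul_cancel_left₀ (ne_of_gt (pow_pos hd0 _))]
  have hterm : ∀ p : ℕ, ‖Wterm Φ z 𝒳 p‖
      ≤ (d:ℝ) ^ m * ((Wz.cnt V p 𝒳 : ℝ) * t ^ p / p.factorial) := by
    intro p
    rcases Nat.eq_zero_or_pos p with hp | hp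
    · subst hp
      have hfil : (Finset.univ.filter
          (fun f : Fin 0 → Finset V => Finset.image f Finset.univ = 𝒳)) = ∅ := by
        refine Finset.filter_false_of_mem (fun f _ => ?_)
        rw [Finset.univ_eq_empty, Finset.image_empty]
        exact fun hc => hne.ne_empty hc.symm
      have h1 : Wterm Φ z 𝒳 0 = 0 := by
        rw [Wterm, hfil]
        simp
      have h2 : Wz.cnt V 0 𝒳 = 0 := by
        rw [Wz.cnt, hfil]
        rfl
      rw [h1, h2]
      simp
    · rw [Wterm]
      rw [norm_mul, norm_inv, Complex.norm_natCast]
      have hsum : ‖∑ f ∈ Finset.univ.filter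
            (fun f : Fin p → Finset V => Finset.image f Finset.univ = 𝒳),
          ((d : ℂ) ^ (Fintype.card V - m))⁻¹ *
            Matrix.trace (List.ofFn (fun j : Fin p => (-(z (f j))) • Φ (f j))).prod‖
          ≤ (Wz.cnt V p 𝒳 : ℝ) * ((d:ℝ) ^ m * t ^ p) := by
        refine (norm_sum_le _ _).trans ?_
        have hone : ∀ f ∈ Finset.univ.filter
            (fun f : Fin p → Finset V => Finset.image f Finset.univ = 𝒳),
            ‖((d : ℂ) ^ (Fintype.card V - m))⁻¹ *
              Matrix.trace (List.ofFn (fun j : Fin p => (-(z (f j))) • Φ (f j))).prod‖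
            ≤ (d:ℝ) ^ m * t ^ p := by
          intro f _
          rw [norm_mul, norm_inv]
          have habs : ‖(d:ℂ) ^ (Fintype.card V - m)‖ = (d:ℝ) ^ (Fintype.card V - m) := by
            rw [norm_pow, Complex.norm_natCast]
          rw [habs]
          calc ((d:ℝ) ^ (Fintype.card V - m))⁻¹ *
              ‖Matrix.trace (List.ofFn (fun j : Fin p => (-(z (f j))) • Φ (f j))).prod‖
              ≤ ((d:ℝ) ^ (Fintype.card V - m))⁻¹ *
                ((d:ℝ) ^ Fintype.card V *
                  ‖(List.ofFn (fun j : Fin p => (-(z (f j))) • Φ (f j))).prod‖) := by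
                gcongr
                exact htrace _
          _ ≤ ((d:ℝ) ^ (Fintype.card V - m))⁻¹ * ((d:ℝ) ^ Fintype.card V * t ^ p) := by
                gcongr
                exact hprod p hp f
          _ = (d:ℝ) ^ m * t ^ p := by rw [← mul_assoc, hdm]
        calc ∑ f ∈ Finset.univ.filter
              (fun f : Fin p → Finset V => Finset.image f Finset.univ = 𝒳),
            ‖((d : ℂ) ^ (Fintype.card V - m))⁻¹ *
              Matrix.trace (List.ofFn (fun j : Fin p => (-(z (f j))) • Φ (f j))).prod‖
            ≤ (Finset.univ.filter
              (fun f : Fin p → Finset V => Finset.image f Finset.univ = 𝒳)).card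
              • ((d:ℝ) ^ m * t ^ p) := Finset.sum_le_card_nsmul _ _ _ hone
        _ = (Wz.cnt V p 𝒳 : ℝ) * ((d:ℝ) ^ m * t ^ p) := by
            rw [nsmul_eq_mul, Wz.cnt]
      calc ((p.factorial : ℝ))⁻¹ * ‖∑ f ∈ Finset.univ.filter
            (fun f : Fin p → Finset V => Finset.image f Finset.univ = 𝒳),
          ((d : ℂ) ^ (Fintype.card V - m))⁻¹ *
            Matrix.trace (List.ofFn (fun j : Fin p => (-(z (f j))) • Φ (f j))).prod‖
          ≤ ((p.factorial : ℝ))⁻¹ * ((Wz.cnt V p 𝒳 : ℝ) * ((d:ℝ) ^ m * t ^ p)) := by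
            gcongr
      _ = (d:ℝ) ^ m * ((Wz.cnt V p 𝒳 : ℝ) * t ^ p / p.factorial) := by
            field_simp
  have hbsum : Summable (fun p : ℕ => (d:ℝ) ^ m * ((Wz.cnt V p 𝒳 : ℝ) * t ^ p / p.factorial)) :=
    (Wz.cnt_summable ht 𝒳).mul_left _
  have hs : Summable (fun p : ℕ => ‖Wterm Φ z 𝒳 p‖) :=
    Summable.of_nonneg_of_le (fun p => norm_nonneg _) hterm hbsum
  refine ⟨hs, ?_⟩
  calc ‖∑' p : ℕ, Wterm Φ z 𝒳 p‖ = ‖∑' p : ℕ, Wterm Φ z 𝒳 p‖ :=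
        rfl
  _ ≤ ∑' p : ℕ, ‖Wterm Φ z 𝒳 p‖ := norm_tsum_le_tsum_norm
        (by simpa using hs)
  _ ≤ ∑' p : ℕ, (d:ℝ) ^ m * ((Wz.cnt V p 𝒳 : ℝ) * t ^ p / p.factorial) := by
        refine Summable.tsum_le_tsum (fun p => ?_) (by simpa using hs) hbsum
        exact hterm p
  _ = (d:ℝ) ^ m * (Real.exp t - 1) ^ 𝒳.card := by
        rw [tsum_mul_left, Wz.cnt_tsum ht]
end

section
/- Let V be a finite set of sites, let 𝒮 be a collection of nonempty subsets of V each of cardinality at most κ (κ ≥ 1 an integer), let h > 0 and g ≥ 1, and fix a site x₀ ∈ V. Assume that for every k ≥ 1 the number of connected sets (relative to 𝒮) of size k containing x₀ is at most g^k. Then for every δ > 0 and β ≥ 0 with β + δ ≤ 1/(5·e·g·h·κ), one has Σ_𝒳 (e^{(δ+β)·h} − 1)^{|𝒳|}·e^{g·h·e²·(δ+β)·|supp(𝒳)|} ≤ e·(e − 1)·g·h·(δ + β), where the (finite) sum runs over all connected sets 𝒳 containing x₀. -/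
lemma my_exp_sub_one_le {t : ℝ} (ht0 : 0 ≤ t) (ht1 : t ≤ 1) :
    Real.exp t - 1 ≤ (Real.exp 1 - 1) * t := by
  have hc := convexOn_exp.2 (Set.mem_univ (0:ℝ)) (Set.mem_univ (1:ℝ))
    (by linarith : (0:ℝ) ≤ 1 - t) ht0 (by ring)
  simp only [smul_eq_mul, mul_zero, mul_one, zero_add, Real.exp_zero] at hc
  nlinarith [hc]

lemma my_exp_le_inv {x : ℝ} (hx : x < 1) : Real.exp x ≤ (1 - x)⁻¹ := by
  have h1 : 1 - x ≤ Real.exp (-x) := by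
    have := Real.add_one_le_exp (-x); linarith
  have h2 : Real.exp x * (1 - x) ≤ 1 := by
    calc Real.exp x * (1 - x) ≤ Real.exp x * Real.exp (-x) := by
          exact mul_le_mul_of_nonneg_left h1 (Real.exp_nonneg x)
      _ = 1 := by rw [← Real.exp_add]; simp
  rw [inv_eq_one_div, le_div_iff₀ (by linarith)]
  exact h2



/-- A connected set (relative to the collection `𝒮`) containing the site `x₀`: a nonempty
collection `𝒳 ⊆ 𝒮` with `x₀ ∈ ⋃ 𝒳` whose overlap graph is connected. -/
def IsConnectedSetIn {V : Type*} [DecidableEq V] (𝒮 : Finset (Finset V)) (x₀ : V)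
    (𝒳 : Finset (Finset V)) : Prop :=
  𝒳.Nonempty ∧ 𝒳 ⊆ 𝒮 ∧ x₀ ∈ 𝒳.biUnion id ∧ (overlapGraph 𝒳).Connected

set_option maxHeartbeats 1000000 in
open Classical in
/-- Lemma B.5 of the paper. If at most `g^k` connected sets of size `k`
contain a fixed site `x₀`, and all members of `𝒮` are nonempty of cardinality at most `κ`,
then for `β + δ ≤ 1/(5 e g h κ)` one has
`Σ_𝒳 (e^{(δ+β)h} - 1)^{|𝒳|} e^{g h e² (δ+β) |supp 𝒳|} ≤ e (e-1) g h (δ+β)`,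
the sum running over connected sets `𝒳` containing `x₀`. -/
theorem connected_sets_weighted_sum_bound {V : Type*} [Fintype V] [DecidableEq V]
    (𝒮 : Finset (Finset V)) (κ : ℕ) (hκ : 1 ≤ κ)
    (h𝒮 : ∀ X ∈ 𝒮, X.Nonempty ∧ X.card ≤ κ)
    (h g : ℝ) (hh : 0 < h) (hg : 1 ≤ g) (x₀ : V)
    (hcount : ∀ k : ℕ, 1 ≤ k →
      ((Finset.univ.filter fun 𝒳 : Finset (Finset V) =>
          IsConnectedSetIn 𝒮 x₀ 𝒳 ∧ 𝒳.card = k).card : ℝ) ≤ g ^ k)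
    (δ β : ℝ) (hδ : 0 < δ) (hβ : 0 ≤ β)
    (hβδ : β + δ ≤ 1 / (5 * Real.exp 1 * g * h * κ)) :
    ∑ 𝒳 ∈ Finset.univ.filter (fun 𝒳 : Finset (Finset V) => IsConnectedSetIn 𝒮 x₀ 𝒳),
      (Real.exp ((δ + β) * h) - 1) ^ 𝒳.card *
        Real.exp (g * h * Real.exp 2 * (δ + β) * (𝒳.biUnion id).card) ≤
      Real.exp 1 * (Real.exp 1 - 1) * g * h * (δ + β) := by
  classical
  have hE9 : (2.7182818:ℝ) < Real.exp 1 := by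
    have := Real.exp_one_gt_d9; norm_num at this ⊢; linarith
  have hE9' : Real.exp 1 < 2.7182819 := by
    have := Real.exp_one_lt_d9; norm_num at this ⊢; linarith
  set E := Real.exp 1 with hEdef
  have he2 : Real.exp 2 = E * E := by
    rw [show (2:ℝ) = 1 + 1 by norm_num, Real.exp_add]
  clear_value E
  have hg0 : (0:ℝ) < g := by linarith
  have hκ1 : (1:ℝ) ≤ (κ:ℝ) := by exact_mod_cast hκ
  have hκ0 : (0:ℝ) < (κ:ℝ) := by linarith
  have hs0 : 0 < δ + β := by linarith
  set s := δ + β with hsdef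
  clear_value s
  have hE0 : (0:ℝ) < E := by linarith
  have hM : g * h * s * (κ:ℝ) * (5 * E) ≤ 1 := by
    have h5 : (0:ℝ) < 5 * E * g * h * κ := by positivity
    rw [le_div_iff₀ h5] at hβδ
    calc g * h * s * (κ:ℝ) * (5 * E) = (β + δ) * (5 * E * g * h * κ) := by rw [hsdef]; ring
      _ ≤ 1 := hβδ
  have hu0 : (0:ℝ) < g * h * s := by positivity
  have hM' : g * h * s * (5 * E) ≤ 1 := by
    nlinarith [hM, hu0, hκ1, hE0, mul_nonneg (mul_nonneg (le_of_lt hu0) (by linarith : (0:ℝ) ≤ 5 * E)) (by linarith : (0:ℝ) ≤ (κ:ℝ) - 1)]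
  have huE' : g * h * s ≤ 0.073576 := by
    have hstep : g * h * s * 13.591409 ≤ g * h * s * (5 * E) := by
      nlinarith [mul_nonneg (le_of_lt hu0) (by linarith : (0:ℝ) ≤ 5 * E - 13.591409)]
    linarith
  have ht0 : 0 ≤ s * h := by positivity
  have ht1 : s * h ≤ 1 := by
    nlinarith [huE', mul_nonneg (by linarith : (0:ℝ) ≤ g - 1) (mul_nonneg hs0.le hh.le)]
  set c := g * h * Real.exp 2 * s * (κ:ℝ) with hcdef
  clear_value c
  have hc0 : 0 ≤ c := by rw [hcdef]; positivity
  have hcE : c ≤ E / 5 := by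
    have h1 : c = (E / 5) * (g * h * s * (κ:ℝ) * (5 * E)) := by rw [hcdef, he2]; ring
    rw [h1]
    calc (E / 5) * (g * h * s * (κ:ℝ) * (5 * E)) ≤ (E / 5) * 1 :=
          mul_le_mul_of_nonneg_left hM (by linarith)
      _ = E / 5 := mul_one _
  have hcnum : c ≤ 0.5436564 := by linarith
  set X := Real.exp c with hXdef
  have hX1 : 1 ≤ X := by rw [hXdef]; exact Real.one_le_exp hc0
  have hXnum : X ≤ 1.887 := by
    have h1 : Real.exp (c/2) ≤ (1 - c/2)⁻¹ := my_exp_le_inv (by linarith)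
    have h2 : (1 - c/2)⁻¹ ≤ ((1:ℝ) - 0.2718282)⁻¹ := by
      apply inv_anti₀ <;> linarith
    have h4 : Real.exp (c/2) ≤ 1.37334 := by
      refine h1.trans (h2.trans ?_); norm_num
    have h3 : X = Real.exp (c/2) * Real.exp (c/2) := by
      rw [hXdef, ← Real.exp_add]; ring_nf
    rw [h3]
    calc Real.exp (c/2) * Real.exp (c/2) ≤ 1.37334 * 1.37334 :=
          mul_le_mul h4 h4 (Real.exp_nonneg _) (by norm_num)
      _ ≤ 1.887 := by norm_num
  clear_value X
  set a := (E - 1) * (s * h) * X with hadef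
  clear_value a
  have ha0 : 0 ≤ a := by
    rw [hadef]
    exact mul_nonneg (mul_nonneg (by linarith) ht0) (by linarith)
  set r := g * a with hrdef
  clear_value r
  have hr0 : 0 ≤ r := by rw [hrdef]; exact mul_nonneg (le_of_lt hg0) ha0
  have hreq : r = (E - 1) * (g * h * s) * X := by rw [hrdef, hadef]; ring
  have hrub : r ≤ 0.2386 := by
    have hb1 : (g * h * s) * X ≤ 0.073576 * 1.887 :=
      mul_le_mul huE' hXnum (by linarith) (by norm_num)
    have hb2 : r ≤ 1.7182819 * (0.073576 * 1.887) := by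
      rw [hreq, mul_assoc]
      exact mul_le_mul (by linarith) hb1
        (mul_nonneg (le_of_lt hu0) (by linarith)) (by norm_num)
    nlinarith [hb2]
  have hr1 : r < 1 := by linarith
  set F := Finset.univ.filter (fun 𝒳 : Finset (Finset V) => IsConnectedSetIn 𝒮 x₀ 𝒳) with hFdef
  set N := 𝒮.card with hNdef
  have hterm : ∀ 𝒳 ∈ F,
      (Real.exp (s * h) - 1) ^ 𝒳.card *
        Real.exp (g * h * Real.exp 2 * s * (𝒳.biUnion id).card) ≤ a ^ 𝒳.card := by
    intro 𝒳 h𝒳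
    rw [hFdef, Finset.mem_filter] at h𝒳
    obtain ⟨-, hne, hsub, -, -⟩ := h𝒳
    have hm : ((𝒳.biUnion id).card : ℝ) ≤ (κ : ℝ) * 𝒳.card := by
      have h1 : (𝒳.biUnion id).card ≤ ∑ Y ∈ 𝒳, (id Y).card := Finset.card_biUnion_le
      have h2 : ∑ Y ∈ 𝒳, (id Y).card ≤ ∑ _Y ∈ 𝒳, κ :=
        Finset.sum_le_sum fun Y hY => (h𝒮 Y (hsub hY)).2
      rw [Finset.sum_const, smul_eq_mul] at h2
      have h3 := h1.trans h2
      have h4 : ((𝒳.biUnion id).card : ℝ) ≤ (𝒳.card * κ : ℕ) := by exact_mod_cast h3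
      push_cast at h4
      linarith
    have hpow : (Real.exp (s * h) - 1) ^ 𝒳.card ≤ ((E - 1) * (s * h)) ^ 𝒳.card := by
      apply pow_le_pow_left₀
      · have := Real.one_le_exp ht0; linarith
      · rw [hEdef]; exact my_exp_sub_one_le ht0 ht1
    have hexp : Real.exp (g * h * Real.exp 2 * s * (𝒳.biUnion id).card) ≤ X ^ 𝒳.card := by
      rw [hXdef, ← Real.exp_nat_mul]
      apply Real.exp_le_exp.2
      have h2 : (0:ℝ) ≤ g * h * Real.exp 2 * s := by positivity
      have : (𝒳.card : ℝ) * c = g * h * Real.exp 2 * s * ((κ:ℝ) * 𝒳.card) := by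
        rw [hcdef]; ring
      rw [this]
      exact mul_le_mul_of_nonneg_left hm h2
    calc (Real.exp (s * h) - 1) ^ 𝒳.card *
          Real.exp (g * h * Real.exp 2 * s * (𝒳.biUnion id).card)
        ≤ ((E - 1) * (s * h)) ^ 𝒳.card * X ^ 𝒳.card := by
          apply mul_le_mul hpow hexp (Real.exp_nonneg _)
          exact pow_nonneg (mul_nonneg (by linarith) ht0) _
      _ = a ^ 𝒳.card := by rw [hadef, ← mul_pow]
  have hmaps : ∀ 𝒳 ∈ F, 𝒳.card ∈ Finset.Icc 1 N := by
    intro 𝒳 h𝒳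
    rw [hFdef, Finset.mem_filter] at h𝒳
    obtain ⟨-, hne, hsub, -, -⟩ := h𝒳
    exact Finset.mem_Icc.2 ⟨Finset.card_pos.2 hne, Finset.card_le_card hsub⟩
  calc ∑ 𝒳 ∈ F, (Real.exp (s * h) - 1) ^ 𝒳.card *
          Real.exp (g * h * Real.exp 2 * s * (𝒳.biUnion id).card)
      ≤ ∑ 𝒳 ∈ F, a ^ 𝒳.card := Finset.sum_le_sum hterm
    _ = ∑ k ∈ Finset.Icc 1 N, ∑ 𝒳 ∈ F.filter (fun 𝒳 => 𝒳.card = k), a ^ 𝒳.card :=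
        (Finset.sum_fiberwise_of_maps_to hmaps _).symm
    _ ≤ ∑ k ∈ Finset.Icc 1 N, r ^ k := by
        apply Finset.sum_le_sum
        intro k hk
        have hk1 : 1 ≤ k := (Finset.mem_Icc.1 hk).1
        have heq : ∑ 𝒳 ∈ F.filter (fun 𝒳 => 𝒳.card = k), a ^ 𝒳.card
            = ((F.filter (fun 𝒳 => 𝒳.card = k)).card : ℝ) * a ^ k := by
          rw [Finset.sum_congr rfl (fun 𝒳 h𝒳 => by rw [(Finset.mem_filter.1 h𝒳).2]),
            Finset.sum_const, nsmul_eq_mul]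
        rw [heq]
        have hfeq : F.filter (fun 𝒳 => 𝒳.card = k)
            = Finset.univ.filter (fun 𝒳 : Finset (Finset V) =>
                IsConnectedSetIn 𝒮 x₀ 𝒳 ∧ 𝒳.card = k) := by
          rw [hFdef, Finset.filter_filter]
        have hcard : ((F.filter (fun 𝒳 => 𝒳.card = k)).card : ℝ) ≤ g ^ k := by
          rw [hfeq]; exact hcount k hk1
        calc ((F.filter (fun 𝒳 => 𝒳.card = k)).card : ℝ) * a ^ k
            ≤ g ^ k * a ^ k := mul_le_mul_of_nonneg_right hcard (pow_nonneg ha0 k)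
          _ = r ^ k := by rw [hrdef, ← mul_pow]
    _ ≤ r * (1 - r)⁻¹ := by
        rw [← Finset.Ico_add_one_right_eq_Icc, Finset.sum_Ico_eq_sum_range]
        have hps : ∀ i : ℕ, r ^ (1 + i) = r * r ^ i := fun i => by rw [pow_add, pow_one]
        simp_rw [hps]
        rw [← Finset.mul_sum]
        apply mul_le_mul_of_nonneg_left _ hr0
        have hsummable := summable_geometric_of_lt_one hr0 hr1
        calc ∑ i ∈ Finset.range (N + 1 - 1), r ^ i
            ≤ ∑' i : ℕ, r ^ i := Summable.sum_le_tsum _ (fun i _ => pow_nonneg hr0 i) hsummable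
          _ = (1 - r)⁻¹ := tsum_geometric_of_lt_one hr0 hr1
    _ ≤ E * (E - 1) * g * h * s := by
        rw [inv_eq_one_div, mul_one_div, div_le_iff₀ (by linarith : (0:ℝ) < 1 - r)]
        have hkey : X ≤ E * (1 - r) := by
          have hE1r : (2.7182818:ℝ) * 0.7614 ≤ E * (1 - r) :=
            mul_le_mul hE9.le (by linarith) (by norm_num) (by linarith)
          have : (1.887:ℝ) ≤ 2.7182818 * 0.7614 := by norm_num
          linarith
        have h2 : (E - 1) * (g * h * s) * X ≤ (E - 1) * (g * h * s) * (E * (1 - r)) := by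
          apply mul_le_mul_of_nonneg_left hkey
          apply mul_nonneg (by linarith) (le_of_lt hu0)
        calc r = (E - 1) * (g * h * s) * X := hreq
          _ ≤ (E - 1) * (g * h * s) * (E * (1 - r)) := h2
          _ = E * (E - 1) * g * h * s * (1 - r) := by ring
end

section
/- Let ρ be a density matrix and let σ₁, σ₂, σ₃ be positive definite density matrices on ℂ^n. Then D(ρ‖σ₁) ≤ D(ρ‖σ₂) + D(ρ‖σ₃) + log Tr[exp(−log σ₁ + log σ₂ + log σ₃)], where exp is the matrix exponential of the Hermitian matrix −log σ₁ + log σ₂ + log σ₃. -/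
open scoped Matrix.Norms.L2Operator ComplexOrder

/-- The logarithm of a matrix, defined for Hermitian matrices via the spectral functional
calculus (with the convention `log 0 = 0`, inherited from `Real.log`), and junk value `0`
on non-Hermitian matrices. -/
noncomputable def matLog {n : ℕ} (A : Matrix (Fin n) (Fin n) ℂ) : Matrix (Fin n) (Fin n) ℂ :=
  if hA : A.IsHermitian then
    (hA.eigenvectorUnitary : Matrix (Fin n) (Fin n) ℂ) *
      Matrix.diagonal (fun i => (Real.log (hA.eigenvalues i) : ℂ)) *
      (star hA.eigenvectorUnitary : Matrix (Fin n) (Fin n) ℂ)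
  else 0

/-- The quantum relative entropy `D(ρ‖M) = Tr[ρ (log ρ - log M)]`. -/
noncomputable def relEnt {n : ℕ} (ρ M : Matrix (Fin n) (Fin n) ℂ) : ℝ :=
  (Matrix.trace (ρ * (matLog ρ - matLog M))).re

section helpers
variable {n : ℕ}

lemma key_real {n : ℕ} (p lam : Fin n → ℝ) (w : Fin n → Fin n → ℝ)
    (hp0 : ∀ i, 0 ≤ p i) (hp1 : ∑ i, p i = 1)
    (hw0 : ∀ j i, 0 ≤ w j i) (hrow : ∀ j, ∑ i, w j i = 1) (hcol : ∀ i, ∑ j, w j i = 1) :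
    ∑ j, (∑ i, w j i * p i) * lam j ≤
      ∑ i, p i * Real.log (p i) + Real.log (∑ j, Real.exp (lam j)) := by
  rcases Nat.eq_zero_or_pos n with hn | hn
  · subst hn; simp at hp1
  have : Nonempty (Fin n) := ⟨⟨0, hn⟩⟩
  set s : Fin n → ℝ := fun j => ∑ i, w j i * p i with hs
  have hs0 : ∀ j, 0 ≤ s j := fun j => Finset.sum_nonneg fun i _ => mul_nonneg (hw0 j i) (hp0 i)
  have hs1 : ∑ j, s j = 1 := by
    rw [hs]
    rw [Finset.sum_comm]
    calc ∑ i, ∑ j, w j i * p i = ∑ i, (∑ j, w j i) * p i := by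
          simp_rw [Finset.sum_mul]
      _ = 1 := by simp_rw [hcol, one_mul, hp1]
  set Z : ℝ := ∑ j, Real.exp (lam j) with hZ
  have hZpos : 0 < Z := Finset.sum_pos (fun j _ => Real.exp_pos _) Finset.univ_nonempty
  have gibbs : ∑ j, s j * lam j - Real.log Z ≤ ∑ j, s j * Real.log (s j) := by
    have key : ∀ j, s j * lam j - s j * Real.log Z - s j * Real.log (s j)
        ≤ Real.exp (lam j) / Z - s j := by
      intro j
      rcases eq_or_lt_of_le (hs0 j) with h0 | h0
      · simp [← h0]
        positivity
      · have hq : 0 < Real.exp (lam j) / Z := by positivity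
        have := Real.log_le_sub_one_of_pos (show 0 < Real.exp (lam j) / Z / s j by positivity)
        have hlog : Real.log (Real.exp (lam j) / Z / s j)
            = lam j - Real.log Z - Real.log (s j) := by
          rw [Real.log_div (ne_of_gt hq) (ne_of_gt h0), Real.log_div (Real.exp_ne_zero _)
            (ne_of_gt hZpos), Real.log_exp]
        rw [hlog] at this
        have := mul_le_mul_of_nonneg_left this (hs0 j)
        calc s j * lam j - s j * Real.log Z - s j * Real.log (s j)
            = s j * (lam j - Real.log Z - Real.log (s j)) := by ring
          _ ≤ s j * (Real.exp (lam j) / Z / s j - 1) := this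
          _ = Real.exp (lam j) / Z - s j := by
              rw [mul_sub, mul_one, mul_comm, div_mul_cancel₀ _ (ne_of_gt h0)]
    have hsum : ∑ j, (s j * lam j - s j * Real.log Z - s j * Real.log (s j))
        ≤ ∑ j, (Real.exp (lam j) / Z - s j) := Finset.sum_le_sum (fun j _ => key j)
    have e1 : ∑ j, (Real.exp (lam j) / Z - s j) = 0 := by
      rw [Finset.sum_sub_distrib, ← Finset.sum_div, ← hZ, hs1, div_self (ne_of_gt hZpos)]
      ring
    have e2 : ∑ j, (s j * lam j - s j * Real.log Z - s j * Real.log (s j))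
        = ∑ j, s j * lam j - Real.log Z - ∑ j, s j * Real.log (s j) := by
      rw [Finset.sum_sub_distrib, Finset.sum_sub_distrib, ← Finset.sum_mul, hs1, one_mul]
    rw [e2, e1] at hsum
    linarith
  have jensen : ∑ j, s j * Real.log (s j) ≤ ∑ i, p i * Real.log (p i) := by
    have step : ∀ j, s j * Real.log (s j) ≤ ∑ i, w j i * (p i * Real.log (p i)) := by
      intro j
      have := Real.convexOn_mul_log.map_sum_le (t := Finset.univ) (w := w j) (p := p)
        (fun i _ => hw0 j i) (hrow j) (fun i _ => hp0 i)
      simpa [smul_eq_mul] using this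
    calc ∑ j, s j * Real.log (s j) ≤ ∑ j, ∑ i, w j i * (p i * Real.log (p i)) :=
          Finset.sum_le_sum fun j _ => step j
      _ = ∑ i, (∑ j, w j i) * (p i * Real.log (p i)) := by
          rw [Finset.sum_comm]; simp_rw [Finset.sum_mul]
      _ = ∑ i, p i * Real.log (p i) := by simp_rw [hcol, one_mul]
  calc ∑ j, s j * lam j ≤ ∑ j, s j * Real.log (s j) + Real.log Z := by linarith
    _ ≤ ∑ i, p i * Real.log (p i) + Real.log Z := by linarith

lemma matLog_of_isHermitian {A : Matrix (Fin n) (Fin n) ℂ} (hA : A.IsHermitian) :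
    matLog A = (hA.eigenvectorUnitary : Matrix (Fin n) (Fin n) ℂ) *
      Matrix.diagonal (fun i => (Real.log (hA.eigenvalues i) : ℂ)) *
      (star hA.eigenvectorUnitary : Matrix (Fin n) (Fin n) ℂ) := dif_pos hA

lemma diagonal_ofReal_isHermitian (d : Fin n → ℝ) :
    (Matrix.diagonal (fun i => (d i : ℂ))).IsHermitian := by
  rw [Matrix.isHermitian_diagonal_iff]
  intro i
  exact Complex.conj_ofReal _

lemma matLog_isHermitian (A : Matrix (Fin n) (Fin n) ℂ) : (matLog A).IsHermitian := by
  unfold matLog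
  split_ifs with hA
  · simpa [Matrix.star_eq_conjTranspose] using
      Matrix.isHermitian_mul_mul_conjTranspose
        (hA.eigenvectorUnitary : Matrix (Fin n) (Fin n) ℂ) (diagonal_ofReal_isHermitian _)
  · exact Matrix.isHermitian_zero

lemma unit_star_mul (V : Matrix.unitaryGroup (Fin n) ℂ) :
    (star V : Matrix (Fin n) (Fin n) ℂ) * (V : Matrix (Fin n) (Fin n) ℂ) = 1 := by
  simpa using V.2.1

lemma unit_mul_star (V : Matrix.unitaryGroup (Fin n) ℂ) :
    (V : Matrix (Fin n) (Fin n) ℂ) * (star V : Matrix (Fin n) (Fin n) ℂ) = 1 := by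
  simpa using V.2.2

lemma trace_unitary_conj (V : Matrix.unitaryGroup (Fin n) ℂ)
    (D : Matrix (Fin n) (Fin n) ℂ) :
    ((V : Matrix (Fin n) (Fin n) ℂ) * D * (star V : Matrix (Fin n) (Fin n) ℂ)).trace
      = D.trace := by
  rw [Matrix.trace_mul_cycle, unit_star_mul, Matrix.one_mul]

lemma spectral' {A : Matrix (Fin n) (Fin n) ℂ} (hA : A.IsHermitian) :
    A = (hA.eigenvectorUnitary : Matrix (Fin n) (Fin n) ℂ) *
      Matrix.diagonal (fun i => (hA.eigenvalues i : ℂ)) *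
      (star hA.eigenvectorUnitary : Matrix (Fin n) (Fin n) ℂ) := by
  convert hA.spectral_theorem using 2
  rfl

lemma trace_exp_unitary_conj (V : Matrix.unitaryGroup (Fin n) ℂ) (d : Fin n → ℝ) :
    (Matrix.trace (NormedSpace.exp
      ((V : Matrix (Fin n) (Fin n) ℂ) * Matrix.diagonal (fun j => (d j : ℂ)) *
        (star V : Matrix (Fin n) (Fin n) ℂ)))) = ((∑ j, Real.exp (d j) : ℝ) : ℂ) := by
  have hU : IsUnit (V : Matrix (Fin n) (Fin n) ℂ) :=
    isUnit_iff_exists.mpr ⟨star V, unit_mul_star V, unit_star_mul V⟩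
  rw [show (star V : Matrix (Fin n) (Fin n) ℂ) = (V : Matrix (Fin n) (Fin n) ℂ)⁻¹ from
      (Matrix.inv_eq_left_inv (unit_star_mul V)).symm,
    Matrix.exp_conj _ _ hU, Matrix.exp_diagonal,
    Matrix.inv_eq_left_inv (unit_star_mul V), trace_unitary_conj V, Matrix.trace_diagonal]
  push_cast
  refine Finset.sum_congr rfl fun j _ => ?_
  rw [Pi.exp_def]
  simp [← Complex.exp_eq_exp_ℂ, ← Complex.ofReal_exp]

/-- Move a unitary-conjugated diagonal through the trace. -/
lemma trace_mul_conj_diag (ρ : Matrix (Fin n) (Fin n) ℂ) (V : Matrix.unitaryGroup (Fin n) ℂ)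
    (D : Matrix (Fin n) (Fin n) ℂ) :
    (ρ * ((V : Matrix (Fin n) (Fin n) ℂ) * D * (star V : Matrix (Fin n) (Fin n) ℂ))).trace
      = (((star V : Matrix (Fin n) (Fin n) ℂ) * ρ * (V : Matrix (Fin n) (Fin n) ℂ)) * D).trace := by
  rw [Matrix.trace_mul_comm]
  rw [show ((V : Matrix (Fin n) (Fin n) ℂ) * D * (star V : Matrix (Fin n) (Fin n) ℂ)) * ρ
      = ((V : Matrix (Fin n) (Fin n) ℂ) * D) * ((star V : Matrix (Fin n) (Fin n) ℂ) * ρ) from by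
    simp only [Matrix.mul_assoc]]
  rw [Matrix.trace_mul_comm]
  rw [show ((star V : Matrix (Fin n) (Fin n) ℂ) * ρ) * ((V : Matrix (Fin n) (Fin n) ℂ) * D)
      = ((star V : Matrix (Fin n) (Fin n) ℂ) * ρ * (V : Matrix (Fin n) (Fin n) ℂ)) * D from by
    simp only [Matrix.mul_assoc]]

end helpers

/-- For a density matrix `ρ` and positive definite density matrices
`σ₁, σ₂, σ₃`, one has
`D(ρ‖σ₁) ≤ D(ρ‖σ₂) + D(ρ‖σ₃) + log Tr[exp(-log σ₁ + log σ₂ + log σ₃)]`. -/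
theorem relEnt_triple_bound {n : ℕ} (ρ σ₁ σ₂ σ₃ : Matrix (Fin n) (Fin n) ℂ)
    (hρ : ρ.PosSemidef) (hρtr : ρ.trace = 1)
    (h1 : σ₁.PosDef) (h1tr : σ₁.trace = 1)
    (h2 : σ₂.PosDef) (h2tr : σ₂.trace = 1)
    (h3 : σ₃.PosDef) (h3tr : σ₃.trace = 1) :
    relEnt ρ σ₁ ≤ relEnt ρ σ₂ + relEnt ρ σ₃ +
      Real.log ((Matrix.trace
        (NormedSpace.exp (-(matLog σ₁) + matLog σ₂ + matLog σ₃))).re) := by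
  classical
  set H : Matrix (Fin n) (Fin n) ℂ := -(matLog σ₁) + matLog σ₂ + matLog σ₃ with hHdef
  have hH : H.IsHermitian :=
    (((matLog_isHermitian σ₁).neg.add (matLog_isHermitian σ₂)).add (matLog_isHermitian σ₃))
  have hρH : ρ.IsHermitian := hρ.1
  set U : Matrix.unitaryGroup (Fin n) ℂ := hρH.eigenvectorUnitary with hUdef
  set V : Matrix.unitaryGroup (Fin n) ℂ := hH.eigenvectorUnitary with hVdef
  set p : Fin n → ℝ := hρH.eigenvalues with hpdef
  set lam : Fin n → ℝ := hH.eigenvalues with hlamdef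
  -- eigenvalue facts for ρ
  have hp0 : ∀ i, 0 ≤ p i := fun i => hρ.eigenvalues_nonneg i
  have hp1 : ∑ i, p i = 1 := by
    have h := congrArg Matrix.trace (spectral' hρH)
    rw [hρtr, trace_unitary_conj, Matrix.trace_diagonal] at h
    have h2 : ((∑ i, p i : ℝ) : ℂ) = 1 := by
      rw [Complex.ofReal_sum]; exact h.symm
    exact_mod_cast h2
  -- the doubly stochastic matrix
  set B : Matrix (Fin n) (Fin n) ℂ :=
    (star V : Matrix (Fin n) (Fin n) ℂ) * (U : Matrix (Fin n) (Fin n) ℂ) with hBdef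
  have hBstar : star B = (star U : Matrix (Fin n) (Fin n) ℂ) * (V : Matrix (Fin n) (Fin n) ℂ) := by
    rw [hBdef, star_mul, star_star]
  have hB1 : B * star B = 1 := by
    rw [hBdef, hBstar]
    calc (star V : Matrix (Fin n) (Fin n) ℂ) * (U : Matrix (Fin n) (Fin n) ℂ) *
          ((star U : Matrix (Fin n) (Fin n) ℂ) * (V : Matrix (Fin n) (Fin n) ℂ))
        = (star V : Matrix (Fin n) (Fin n) ℂ) *
          (((U : Matrix (Fin n) (Fin n) ℂ) * (star U : Matrix (Fin n) (Fin n) ℂ)) *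
            (V : Matrix (Fin n) (Fin n) ℂ)) := by simp only [Matrix.mul_assoc]
      _ = 1 := by rw [unit_mul_star U, Matrix.one_mul, unit_star_mul V]
  have hB2 : star B * B = 1 := by
    rw [hBdef, hBstar]
    calc (star U : Matrix (Fin n) (Fin n) ℂ) * (V : Matrix (Fin n) (Fin n) ℂ) *
          ((star V : Matrix (Fin n) (Fin n) ℂ) * (U : Matrix (Fin n) (Fin n) ℂ))
        = (star U : Matrix (Fin n) (Fin n) ℂ) *
          (((V : Matrix (Fin n) (Fin n) ℂ) * (star V : Matrix (Fin n) (Fin n) ℂ)) *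
            (U : Matrix (Fin n) (Fin n) ℂ)) := by simp only [Matrix.mul_assoc]
      _ = 1 := by rw [unit_mul_star V, Matrix.one_mul, unit_star_mul U]
  set w : Fin n → Fin n → ℝ := fun j i => Complex.normSq (B j i) with hwdef
  have hw0 : ∀ j i, 0 ≤ w j i := fun j i => Complex.normSq_nonneg _
  have hrow : ∀ j, ∑ i, w j i = 1 := by
    intro j
    have h := congrFun (congrFun hB1 j) j
    simp only [Matrix.mul_apply, Matrix.star_apply, Matrix.one_apply_eq] at h
    have h' : ((∑ i, w j i : ℝ) : ℂ) = 1 := by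
      rw [Complex.ofReal_sum, ← h]
      exact Finset.sum_congr rfl fun i _ => (Complex.mul_conj _).symm
    exact_mod_cast h'
  have hcol : ∀ i, ∑ j, w j i = 1 := by
    intro i
    have h := congrFun (congrFun hB2 i) i
    simp only [Matrix.mul_apply, Matrix.star_apply, Matrix.one_apply_eq] at h
    have h' : ((∑ j, w j i : ℝ) : ℂ) = 1 := by
      rw [Complex.ofReal_sum, ← h]
      refine Finset.sum_congr rfl fun j _ => ?_
      rw [mul_comm]
      exact (Complex.mul_conj _).symm
    exact_mod_cast h'
  -- diagonal entries of star V * ρ * V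
  have hT : (star V : Matrix (Fin n) (Fin n) ℂ) * ρ * (V : Matrix (Fin n) (Fin n) ℂ)
      = B * Matrix.diagonal (fun i => (p i : ℂ)) * star B := by
    conv_lhs => rw [spectral' hρH]
    rw [hBdef, hBstar]
    simp only [Matrix.mul_assoc]
    rfl
  have hTdiag : ∀ j, ((star V : Matrix (Fin n) (Fin n) ℂ) * ρ * (V : Matrix (Fin n) (Fin n) ℂ)) j j
      = ((∑ i, w j i * p i : ℝ) : ℂ) := by
    intro j
    rw [hT, Complex.ofReal_sum]
    rw [Matrix.mul_apply]
    refine Finset.sum_congr rfl fun i _ => ?_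
    rw [Matrix.mul_diagonal, Matrix.star_apply, mul_right_comm, RCLike.star_def, Complex.mul_conj]
    push_cast
    ring
  -- trace of ρ * H
  have hρHtr : (ρ * H).trace = ((∑ j, (∑ i, w j i * p i) * lam j : ℝ) : ℂ) := by
    have hHs : H = (V : Matrix (Fin n) (Fin n) ℂ) *
        Matrix.diagonal (fun j => (lam j : ℂ)) * (star V : Matrix (Fin n) (Fin n) ℂ) :=
      spectral' hH
    conv_lhs => rw [hHs]
    rw [trace_mul_conj_diag, Matrix.trace]
    rw [Complex.ofReal_sum]
    refine Finset.sum_congr rfl fun j _ => ?_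
    rw [Matrix.diag_apply, Matrix.mul_diagonal, hTdiag j]
    push_cast
    ring
  -- trace of ρ * matLog ρ
  have hρlogtr : (ρ * matLog ρ).trace = ((∑ i, p i * Real.log (p i) : ℝ) : ℂ) := by
    rw [matLog_of_isHermitian hρH]
    rw [trace_mul_conj_diag ρ U, (show (star U : Matrix (Fin n) (Fin n) ℂ) * ρ * (U : Matrix (Fin n) (Fin n) ℂ)
        = Matrix.diagonal (RCLike.ofReal ∘ hρH.eigenvalues) by
        simpa using hρH.conjStarAlgAut_star_eigenvectorUnitary),
      Matrix.diagonal_mul_diagonal, Matrix.trace_diagonal]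
    rw [Complex.ofReal_sum]
    refine Finset.sum_congr rfl fun i _ => ?_
    push_cast
    simp [Function.comp]
    rfl
  -- trace of exp H
  have hZc : (NormedSpace.exp H).trace = ((∑ j, Real.exp (lam j) : ℝ) : ℂ) := by
    conv_lhs => rw [spectral' hH]
    exact trace_exp_unitary_conj V lam
  -- now assemble
  have key := key_real p lam w hp0 hp1 hw0 hrow hcol
  have hlin : (ρ * H).trace.re = -(ρ * matLog σ₁).trace.re + (ρ * matLog σ₂).trace.re
      + (ρ * matLog σ₃).trace.re := by
    rw [hHdef]
    rw [Matrix.mul_add, Matrix.mul_add, Matrix.mul_neg, Matrix.trace_add, Matrix.trace_add,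
      Matrix.trace_neg]
    simp [Complex.add_re, Complex.neg_re]
  have hρHre : (ρ * H).trace.re = ∑ j, (∑ i, w j i * p i) * lam j := by
    rw [hρHtr, Complex.ofReal_re]
  have hρlogre : (ρ * matLog ρ).trace.re = ∑ i, p i * Real.log (p i) := by
    rw [hρlogtr, Complex.ofReal_re]
  have hZre : (NormedSpace.exp H).trace.re = ∑ j, Real.exp (lam j) := by
    rw [hZc, Complex.ofReal_re]
  simp only [relEnt]
  have expand : ∀ M : Matrix (Fin n) (Fin n) ℂ,
      (ρ * (matLog ρ - matLog M)).trace.re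
        = (ρ * matLog ρ).trace.re - (ρ * matLog M).trace.re := by
    intro M
    rw [Matrix.mul_sub, Matrix.trace_sub, Complex.sub_re]
  rw [expand σ₁, expand σ₂, expand σ₃, hZre]
  linarith [key, hlin, hρHre, hρlogre]
end

section
/- Let C denote the pinching onto diagonal matrices in the standard basis of ℂ^n, i.e. C(ρ) is the diagonal part of ρ. Then for every t ≥ 0 the dephasing semigroup satisfies exp(t(C − id))(ρ) = e^{−t}·ρ + (1 − e^{−t})·C(ρ), and for every positive definite density matrix ρ and t ≥ 0, D(e^{−t}ρ + (1 − e^{−t})C(ρ) ‖ C(ρ)) ≤ e^{−t}·D(ρ‖C(ρ)). In particular the dephasing semigroup generated by C − id contracts the relative entropy to the pinched state exponentially with rate 1 (modified logarithmic Sobolev constant 1/4). -/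
open scoped Matrix.Norms.L2Operator ComplexOrder


/-- The ring of continuous linear endomorphisms of the matrix algebra is a topological ring
(this registers an instance that is definitionally available but not found by synthesis). -/
instance matrixCLMTopologicalRing (n : ℕ) :
    IsTopologicalRing (Matrix (Fin n) (Fin n) ℂ →L[ℂ] Matrix (Fin n) (Fin n) ℂ) :=
  @NonUnitalSeminormedRing.toIsTopologicalRing
    (Matrix (Fin n) (Fin n) ℂ →L[ℂ] Matrix (Fin n) (Fin n) ℂ) inferInstance

/-- The pinching onto diagonal matrices in the standard basis, as a continuous linear map
on matrices: `C(ρ)` is the diagonal part of `ρ`. -/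
noncomputable def pinchCLM (n : ℕ) :
    Matrix (Fin n) (Fin n) ℂ →L[ℂ] Matrix (Fin n) (Fin n) ℂ :=
  LinearMap.toContinuousLinearMap
    { toFun := fun ρ => Matrix.diagonal fun i => ρ i i
      map_add' := by
        intro x y
        ext i j
        by_cases h : i = j <;> simp [Matrix.diagonal, h]
      map_smul' := by
        intro c x
        ext i j
        by_cases h : i = j <;> simp [Matrix.diagonal, h] }


lemma pinchCLM_apply {n : ℕ} (ρ : Matrix (Fin n) (Fin n) ℂ) :
    pinchCLM n ρ = Matrix.diagonal fun i => ρ i i := rfl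

set_option maxHeartbeats 1000000 in
lemma exp_smul_idem {A : Type*} [NormedRing A] [NormedAlgebra ℂ A] [CompleteSpace A]
    (c : ℂ) (Q : A) (hQ : Q * Q = Q) :
    NormedSpace.exp (c • Q) = 1 + (Complex.exp c - 1) • Q := by
  have hQpow : ∀ k : ℕ, Q ^ (k + 1) = Q := by
    intro k
    induction k with
    | zero => simp
    | succ k ih => rw [pow_succ, ih, hQ]
  have hsum : Summable (fun k : ℕ => ((Nat.factorial k : ℂ))⁻¹ • (c • Q) ^ k) :=
    NormedSpace.expSeries_summable' (c • Q)
  have hcsum : Summable (fun k : ℕ => ((Nat.factorial k : ℂ))⁻¹ • c ^ k) :=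
    NormedSpace.expSeries_summable' (𝕂 := ℂ) c
  have hcsum' : Summable (fun k : ℕ => ((Nat.factorial (k+1) : ℂ))⁻¹ • c ^ (k + 1)) :=
    (summable_nat_add_iff 1).2 hcsum
  rw [NormedSpace.exp_eq_tsum ℂ]
  beta_reduce
  rw [Summable.tsum_eq_zero_add hsum]
  have h0 : ((Nat.factorial 0 : ℂ))⁻¹ • (c • Q) ^ 0 = 1 := by simp
  have hshift : ∀ k : ℕ, ((Nat.factorial (k+1) : ℂ))⁻¹ • (c • Q) ^ (k+1)
      = (((Nat.factorial (k+1) : ℂ))⁻¹ • c ^ (k+1)) • Q := by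
    intro k
    rw [smul_pow, hQpow, smul_smul, smul_eq_mul]
  rw [h0]
  simp_rw [hshift]
  rw [Summable.tsum_smul_const hcsum']
  congr 1
  congr 1
  have := congrFun Complex.exp_eq_exp_ℂ c
  rw [this, NormedSpace.exp_eq_tsum ℂ]
  beta_reduce
  rw [Summable.tsum_eq_zero_add hcsum]
  simp

/-- Conjugation by a unitary, as an algebra homomorphism. -/
noncomputable def conjAH {n : ℕ} (U : Matrix.unitaryGroup (Fin n) ℂ) :
    Matrix (Fin n) (Fin n) ℂ →ₐ[ℂ] Matrix (Fin n) (Fin n) ℂ where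
  toFun x := (U : Matrix (Fin n) (Fin n) ℂ) * x * (star U : Matrix (Fin n) (Fin n) ℂ)
  map_one' := by
    show (U : Matrix (Fin n) (Fin n) ℂ) * 1 * (star U : Matrix (Fin n) (Fin n) ℂ) = 1
    rw [mul_one]
    exact Matrix.mem_unitaryGroup_iff.mp U.2
  map_mul' x y := by
    have h : (star U : Matrix (Fin n) (Fin n) ℂ) * (U : Matrix (Fin n) (Fin n) ℂ) = 1 :=
      Matrix.mem_unitaryGroup_iff'.mp U.2
    calc (U : Matrix (Fin n) (Fin n) ℂ) * (x * y) * (star U : Matrix (Fin n) (Fin n) ℂ)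
        = ((U : Matrix (Fin n) (Fin n) ℂ) * x *
            ((star U : Matrix (Fin n) (Fin n) ℂ) * (U : Matrix (Fin n) (Fin n) ℂ)) * y) *
            (star U : Matrix (Fin n) (Fin n) ℂ) := by rw [h]; noncomm_ring
      _ = _ := by noncomm_ring
  map_zero' := by simp
  map_add' x y := by
    show (U : Matrix (Fin n) (Fin n) ℂ) * (x + y) * (star U : Matrix (Fin n) (Fin n) ℂ) = _
    rw [mul_add, add_mul]
  commutes' c := by
    show (U : Matrix (Fin n) (Fin n) ℂ) * _ * (star U : Matrix (Fin n) (Fin n) ℂ) = _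
    rw [Matrix.algebraMap_eq_diagonal]
    rw [show Matrix.diagonal ((algebraMap ℂ (Fin n → ℂ)) c) = c • (1 : Matrix (Fin n) (Fin n) ℂ)
      from by rw [Pi.algebraMap_def]; simp [Matrix.smul_eq_diagonal_mul]]
    rw [Matrix.mul_smul, Matrix.smul_mul, mul_one, Matrix.mem_unitaryGroup_iff.mp U.2]

lemma aeval_conj {n : ℕ} (U : Matrix.unitaryGroup (Fin n) ℂ)
    (D : Matrix (Fin n) (Fin n) ℂ) (p : Polynomial ℂ) :
    Polynomial.aeval ((U : Matrix (Fin n) (Fin n) ℂ) * D *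
        (star U : Matrix (Fin n) (Fin n) ℂ)) p =
      (U : Matrix (Fin n) (Fin n) ℂ) * Polynomial.aeval D p *
        (star U : Matrix (Fin n) (Fin n) ℂ) :=
  Polynomial.aeval_algHom_apply (conjAH U) D p

lemma aeval_diagonal {n : ℕ} (d : Fin n → ℂ) (p : Polynomial ℂ) :
    Polynomial.aeval (Matrix.diagonal d) p
      = Matrix.diagonal (fun i => Polynomial.aeval (d i) p) := by
  have h1 : Polynomial.aeval (Matrix.diagonalAlgHom ℂ d) p
      = Matrix.diagonalAlgHom ℂ (Polynomial.aeval d p) :=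
    (Polynomial.aeval_algHom_apply (Matrix.diagonalAlgHom ℂ) d p)
  have h2 : ∀ i, (Polynomial.aeval d p) i = Polynomial.aeval (d i) p := fun i =>
    (Polynomial.aeval_algHom_apply (Pi.evalAlgHom ℂ (fun _ : Fin n => ℂ) i) d p).symm
  simpa [Matrix.diagonalAlgHom_apply, funext h2] using h1

lemma aeval_ofReal_map {x : ℝ} (p : Polynomial ℝ) :
    Polynomial.aeval (R := ℂ) ((x : ℂ)) (p.map Complex.ofRealHom) = ((p.eval x : ℝ) : ℂ) := by
  have : (algebraMap ℂ ℂ).comp Complex.ofRealHom = Complex.ofRealHom := by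
    ext y; simp
  rw [Polynomial.aeval_def, Polynomial.eval₂_map, this]
  exact Polynomial.eval₂_at_apply Complex.ofRealHom x

lemma matLog_eq_aeval {n : ℕ} {A : Matrix (Fin n) (Fin n) ℂ} (hA : A.IsHermitian)
    (s : Finset ℝ) (hs : ∀ i, hA.eigenvalues i ∈ s) :
    matLog A =
      Polynomial.aeval (R := ℂ) A ((Lagrange.interpolate s id Real.log).map Complex.ofRealHom) := by
  conv_rhs => rw [hA.spectral_theorem, Unitary.conjStarAlgAut_apply]
  rw [aeval_conj, aeval_diagonal, matLog, dif_pos hA]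
  have hfun : (fun i => Polynomial.aeval (R := ℂ)
        ((RCLike.ofReal ∘ hA.eigenvalues) i)
        ((Lagrange.interpolate s id Real.log).map Complex.ofRealHom))
      = fun i => (Real.log (hA.eigenvalues i) : ℂ) := by
    funext i
    have hco : ((RCLike.ofReal (hA.eigenvalues i)) : ℂ) = ((hA.eigenvalues i : ℝ) : ℂ) := rfl
    rw [Function.comp_apply, hco, aeval_ofReal_map]
    have hnode := Lagrange.eval_interpolate_at_node Real.log (Set.injOn_id (s : Set ℝ)) (hs i)
    simp only [id] at hnode
    rw [hnode]
  rw [hfun]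

lemma matLog_diagonal {n : ℕ} (d : Fin n → ℝ) :
    matLog (Matrix.diagonal (fun i => (d i : ℂ)))
      = Matrix.diagonal (fun i => (Real.log (d i) : ℂ)) := by
  have hσ : (Matrix.diagonal (fun i => (d i : ℂ))).IsHermitian :=
    Matrix.isHermitian_diagonal_iff.mpr fun i => by
      simp [IsSelfAdjoint, Complex.conj_ofReal]
  set s : Finset ℝ := Finset.image hσ.eigenvalues Finset.univ ∪ Finset.image d Finset.univ
    with hs_def
  have hs : ∀ i, hσ.eigenvalues i ∈ s := fun i =>
    Finset.mem_union_left _ (Finset.mem_image_of_mem _ (Finset.mem_univ i))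
  have hd : ∀ i, d i ∈ s := fun i =>
    Finset.mem_union_right _ (Finset.mem_image_of_mem _ (Finset.mem_univ i))
  rw [matLog_eq_aeval hσ s hs, aeval_diagonal]
  have hfun : (fun i => Polynomial.aeval (R := ℂ) ((d i : ℂ))
        ((Lagrange.interpolate s id Real.log).map Complex.ofRealHom))
      = fun i => (Real.log (d i) : ℂ) := by
    funext i
    rw [aeval_ofReal_map]
    have hnode := Lagrange.eval_interpolate_at_node Real.log (Set.injOn_id (s : Set ℝ)) (hd i)
    simp only [id] at hnode
    rw [hnode]
  rw [hfun]

lemma trace_mul_diagonal {n : ℕ} (X : Matrix (Fin n) (Fin n) ℂ) (g : Fin n → ℂ) :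
    Matrix.trace (X * Matrix.diagonal g) = ∑ i, X i i * g i := by
  simp [Matrix.trace, Matrix.diag, Matrix.mul_diagonal]

lemma trace_conj_pair {n : ℕ} (U V : Matrix.unitaryGroup (Fin n) ℂ) (a c : Fin n → ℂ) :
    Matrix.trace ((U : Matrix (Fin n) (Fin n) ℂ) * Matrix.diagonal a *
        (star U : Matrix (Fin n) (Fin n) ℂ) *
        ((V : Matrix (Fin n) (Fin n) ℂ) * Matrix.diagonal c *
          (star V : Matrix (Fin n) (Fin n) ℂ)))
      = ∑ i, ∑ j, a i * c j *
          (Complex.normSq ((star (U : Matrix (Fin n) (Fin n) ℂ) *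
            (V : Matrix (Fin n) (Fin n) ℂ)) i j) : ℂ) := by
  set M : Matrix (Fin n) (Fin n) ℂ := (U : Matrix (Fin n) (Fin n) ℂ) with hM
  set N : Matrix (Fin n) (Fin n) ℂ := (V : Matrix (Fin n) (Fin n) ℂ) with hN
  set W : Matrix (Fin n) (Fin n) ℂ := star M * N with hW
  have hU : M * star M = 1 := Matrix.mem_unitaryGroup_iff.mp U.2
  have hU' : star M * M = 1 := Matrix.mem_unitaryGroup_iff'.mp U.2
  have h2 : M * Matrix.diagonal a * star M * (N * Matrix.diagonal c * star N)
      = M * (Matrix.diagonal a * W * Matrix.diagonal c * star W) * star M := by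
    simp only [hW, Matrix.star_mul, star_star, Matrix.mul_assoc]
    rw [show M * star M = 1 from hU]
    simp [Matrix.mul_assoc]
  rw [h2, Matrix.trace_mul_cycle, ← Matrix.mul_assoc, hU', one_mul]
  simp only [Matrix.trace, Matrix.diag, Matrix.mul_apply, Matrix.diagonal_apply,
    Matrix.star_apply]
  refine Finset.sum_congr rfl fun i _ => Finset.sum_congr rfl fun j _ => ?_
  simp only [ite_mul, zero_mul, Finset.sum_ite_eq, Finset.sum_ite_eq', Finset.mem_univ,
    if_true, mul_ite, mul_zero]
  rw [show (a i * W i j) * c j * star (W i j) = a i * c j * (W i j * star (W i j)) from by ring]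
  rw [Complex.star_def, Complex.mul_conj]

lemma re_trace_mul_matLog {n : ℕ} {A B : Matrix (Fin n) (Fin n) ℂ}
    (hA : A.IsHermitian) (hB : B.IsHermitian) :
    (Matrix.trace (A * matLog B)).re
      = ∑ i, ∑ j, Complex.normSq ((star (hA.eigenvectorUnitary : Matrix (Fin n) (Fin n) ℂ) *
            (hB.eigenvectorUnitary : Matrix (Fin n) (Fin n) ℂ)) i j) *
          (hA.eigenvalues i * Real.log (hB.eigenvalues j)) := by
  conv_lhs => rw [hA.spectral_theorem, Unitary.conjStarAlgAut_apply, matLog, dif_pos hB]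
  rw [trace_conj_pair hA.eigenvectorUnitary hB.eigenvectorUnitary]
  rw [Complex.re_sum]
  refine Finset.sum_congr rfl fun i _ => ?_
  rw [Complex.re_sum]
  refine Finset.sum_congr rfl fun j _ => ?_
  have hcoe : ((RCLike.ofReal ∘ hA.eigenvalues) i : ℂ) = ((hA.eigenvalues i : ℝ) : ℂ) := rfl
  rw [hcoe, ← Complex.ofReal_mul, ← Complex.ofReal_mul, Complex.ofReal_re]
  ring

lemma re_trace_eigen {n : ℕ} {A : Matrix (Fin n) (Fin n) ℂ} (hA : A.IsHermitian) :
    (Matrix.trace A).re = ∑ i, hA.eigenvalues i := by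
  conv_lhs => rw [hA.spectral_theorem, Unitary.conjStarAlgAut_apply]
  rw [Matrix.trace_mul_cycle,
    Matrix.mem_unitaryGroup_iff'.mp hA.eigenvectorUnitary.2, one_mul, Matrix.trace_diagonal]
  rw [Complex.re_sum]
  refine Finset.sum_congr rfl fun i _ => ?_
  exact Complex.ofReal_re _

lemma row_sum_normSq {n : ℕ} (W : Matrix.unitaryGroup (Fin n) ℂ) (i : Fin n) :
    ∑ j, Complex.normSq ((W : Matrix (Fin n) (Fin n) ℂ) i j) = 1 := by
  have h := Matrix.mem_unitaryGroup_iff.mp W.2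
  have h2 := congrFun (congrFun h i) i
  rw [Matrix.mul_apply] at h2
  have h3 : ∀ j, (W : Matrix (Fin n) (Fin n) ℂ) i j *
      (star (W : Matrix (Fin n) (Fin n) ℂ)) j i
      = (Complex.normSq ((W : Matrix (Fin n) (Fin n) ℂ) i j) : ℂ) := fun j => by
    rw [Matrix.star_apply, Complex.star_def, Complex.mul_conj]
  rw [Finset.sum_congr rfl fun j _ => h3 j] at h2
  have := congrArg Complex.re h2
  rw [Complex.re_sum] at this
  simpa using this

lemma col_sum_normSq {n : ℕ} (W : Matrix.unitaryGroup (Fin n) ℂ) (j : Fin n) :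
    ∑ i, Complex.normSq ((W : Matrix (Fin n) (Fin n) ℂ) i j) = 1 := by
  have h := Matrix.mem_unitaryGroup_iff'.mp W.2
  have h2 := congrFun (congrFun h j) j
  rw [Matrix.mul_apply] at h2
  have h3 : ∀ i, (star (W : Matrix (Fin n) (Fin n) ℂ)) j i *
      (W : Matrix (Fin n) (Fin n) ℂ) i j
      = (Complex.normSq ((W : Matrix (Fin n) (Fin n) ℂ) i j) : ℂ) := fun i => by
    rw [Matrix.star_apply, Complex.star_def, mul_comm, Complex.mul_conj]
  rw [Finset.sum_congr rfl fun i _ => h3 i] at h2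
  have := congrArg Complex.re h2
  rw [Complex.re_sum] at this
  simpa using this

lemma klein {n : ℕ} {A B : Matrix (Fin n) (Fin n) ℂ} (hA : A.PosDef) (hB : B.PosDef) :
    (Matrix.trace A).re - (Matrix.trace B).re
      ≤ (Matrix.trace (A * matLog A)).re - (Matrix.trace (A * matLog B)).re := by
  set α := hA.1.eigenvalues with hα
  set β := hB.1.eigenvalues with hβ
  set Wg : Matrix.unitaryGroup (Fin n) ℂ :=
    (star hA.1.eigenvectorUnitary) * hB.1.eigenvectorUnitary with hWg
  set W : Matrix (Fin n) (Fin n) ℂ := star (hA.1.eigenvectorUnitary : Matrix (Fin n) (Fin n) ℂ) *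
    (hB.1.eigenvectorUnitary : Matrix (Fin n) (Fin n) ℂ) with hW
  have hWcoe : (Wg : Matrix (Fin n) (Fin n) ℂ) = W := rfl
  have hrow : ∀ i, ∑ j, Complex.normSq (W i j) = 1 := fun i => by
    rw [← hWcoe]; exact row_sum_normSq Wg i
  have hcol : ∀ j, ∑ i, Complex.normSq (W i j) = 1 := fun j => by
    rw [← hWcoe]; exact col_sum_normSq Wg j
  have hαpos : ∀ i, 0 < α i := hA.eigenvalues_pos
  have hβpos : ∀ j, 0 < β j := hB.eigenvalues_pos
  -- T2
  have hT2 : (Matrix.trace (A * matLog B)).re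
      = ∑ i, ∑ j, Complex.normSq (W i j) * (α i * Real.log (β j)) :=
    re_trace_mul_matLog hA.1 hB.1
  -- T1
  have hT1 : (Matrix.trace (A * matLog A)).re
      = ∑ i, ∑ j, Complex.normSq (W i j) * (α i * Real.log (α i)) := by
    rw [re_trace_mul_matLog hA.1 hA.1]
    have hee : star (hA.1.eigenvectorUnitary : Matrix (Fin n) (Fin n) ℂ) *
        (hA.1.eigenvectorUnitary : Matrix (Fin n) (Fin n) ℂ) = 1 :=
      Matrix.mem_unitaryGroup_iff'.mp hA.1.eigenvectorUnitary.2
    rw [hee]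
    refine Finset.sum_congr rfl fun i _ => ?_
    have hl : ∀ j, Complex.normSq ((1 : Matrix (Fin n) (Fin n) ℂ) i j)
        = if i = j then 1 else 0 := fun j => by
      by_cases h : i = j <;> simp [Matrix.one_apply, h]
    rw [Finset.sum_congr rfl fun j _ => by rw [hl j]]
    simp only [ite_mul, one_mul, zero_mul, Finset.sum_ite_eq, Finset.mem_univ, if_true]
    rw [← Finset.sum_mul, hrow i, one_mul]
  have htrA : (Matrix.trace A).re = ∑ i, ∑ j, Complex.normSq (W i j) * α i := by
    rw [re_trace_eigen hA.1]
    refine Finset.sum_congr rfl fun i _ => ?_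
    rw [← Finset.sum_mul, hrow i, one_mul]
  have htrB : (Matrix.trace B).re = ∑ i, ∑ j, Complex.normSq (W i j) * β j := by
    rw [re_trace_eigen hB.1, Finset.sum_comm]
    refine Finset.sum_congr rfl fun j _ => ?_
    rw [← Finset.sum_mul, hcol j, one_mul]
  rw [hT1, hT2, htrA, htrB]
  rw [← Finset.sum_sub_distrib, ← Finset.sum_sub_distrib]
  refine Finset.sum_le_sum fun i _ => ?_
  rw [← Finset.sum_sub_distrib, ← Finset.sum_sub_distrib]
  refine Finset.sum_le_sum fun j _ => ?_
  rw [← mul_sub, ← mul_sub]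
  refine mul_le_mul_of_nonneg_left ?_ (Complex.normSq_nonneg _)
  have hlog := Real.log_le_sub_one_of_pos (show (0:ℝ) < β j / α i from
    div_pos (hβpos j) (hαpos i))
  rw [Real.log_div (hβpos j).ne' (hαpos i).ne'] at hlog
  have hai := hαpos i
  have := mul_le_mul_of_nonneg_left hlog (le_of_lt hai)
  rw [mul_sub] at this
  have hdiv : α i * (β j / α i) = β j := by field_simp
  nlinarith [hαpos i, hβpos j]

/-- The dephasing semigroup `exp (t (C - id))` generated by the pinching `C`
onto diagonal matrices is explicitly `e^{-t} ρ + (1 - e^{-t}) C(ρ)`, and it contracts the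
relative entropy to the pinched state exponentially fast with rate `1`:
`D(e^{-t} ρ + (1-e^{-t}) C(ρ) ‖ C(ρ)) ≤ e^{-t} D(ρ ‖ C(ρ))` for every positive definite
density matrix `ρ` and every `t ≥ 0`. -/
theorem dephasing_semigroup_entropy_decay {n : ℕ} :
    (∀ t : ℝ, 0 ≤ t → ∀ ρ : Matrix (Fin n) (Fin n) ℂ,
      NormedSpace.exp ((t : ℂ) • (pinchCLM n - 1)) ρ =
        (Real.exp (-t) : ℂ) • ρ + ((1 - Real.exp (-t) : ℝ) : ℂ) • pinchCLM n ρ) ∧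
    (∀ t : ℝ, 0 ≤ t → ∀ ρ : Matrix (Fin n) (Fin n) ℂ, ρ.PosDef → ρ.trace = 1 →
      relEnt ((Real.exp (-t) : ℂ) • ρ + ((1 - Real.exp (-t) : ℝ) : ℂ) • pinchCLM n ρ)
          (pinchCLM n ρ) ≤
        Real.exp (-t) * relEnt ρ (pinchCLM n ρ)) := by
  constructor
  · -- Part 1: explicit formula for the semigroup
    intro t ht ρ
    have hC : pinchCLM n * pinchCLM n = pinchCLM n := by
      ext σ i j
      simp [ContinuousLinearMap.mul_apply, pinchCLM_apply, Matrix.diagonal]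
    have hQ : (1 - pinchCLM n) * (1 - pinchCLM n) = 1 - pinchCLM n := by
      calc (1 - pinchCLM n) * (1 - pinchCLM n)
          = 1 - pinchCLM n - (pinchCLM n - pinchCLM n * pinchCLM n) := by
            rw [sub_mul, one_mul, mul_sub, mul_one]
        _ = 1 - pinchCLM n := by rw [hC]; abel
    have h1 : ((t:ℂ)) • (pinchCLM n - 1) = (-(t:ℂ)) • (1 - pinchCLM n) := by
      module
    have key := exp_smul_idem (-(t:ℂ)) (1 - pinchCLM n) hQ
    rw [h1, key]
    have hexp : Complex.exp (-(t:ℂ)) = ((Real.exp (-t) : ℝ) : ℂ) := by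
      rw [Complex.ofReal_exp]; norm_cast
    rw [hexp]
    simp only [ContinuousLinearMap.add_apply, ContinuousLinearMap.smul_apply,
      ContinuousLinearMap.sub_apply, ContinuousLinearMap.one_apply]
    push_cast
    module
  · -- Part 2: entropy decay
    intro t ht ρ hρ htr
    set a : ℝ := Real.exp (-t) with ha_def
    set b : ℝ := 1 - a with hb_def
    have ha0 : 0 < a := Real.exp_pos _
    have ha1 : a ≤ 1 := Real.exp_le_one_iff.mpr (by linarith)
    have hb0 : 0 ≤ b := by rw [hb_def]; linarith
    set r : Fin n → ℝ := fun i => (ρ i i).re with hr_def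
    have hdiag : ∀ i, ρ i i = ((r i : ℝ) : ℂ) := by
      intro i
      have h := congrFun (congrFun hρ.1 i) i
      rw [Matrix.conjTranspose_apply] at h
      exact (Complex.conj_eq_iff_re.mp h).symm
    have hrpos : ∀ i, 0 < r i := by
      intro i
      have hx : (Pi.single i 1 : Fin n → ℂ) ≠ 0 := by
        intro h
        have := congrFun h i
        simp at this
      have hpos := hρ.re_dotProduct_pos hx
      have hval : dotProduct (star (Pi.single i 1 : Fin n → ℂ))
          (ρ.mulVec (Pi.single i 1)) = ρ i i := by
        simp [dotProduct, Matrix.mulVec, Pi.single_apply, apply_ite (star : ℂ → ℂ),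
          Finset.sum_ite_eq, Finset.mul_sum]
      rw [hval] at hpos
      exact hpos
    set σ : Matrix (Fin n) (Fin n) ℂ := Matrix.diagonal (fun i => ((r i : ℝ) : ℂ)) with hσ_def
    have hpinch : pinchCLM n ρ = σ := by
      rw [pinchCLM_apply, hσ_def,
        show (fun i => ρ i i) = (fun i => ((r i : ℝ) : ℂ)) from funext hdiag]
    have hσpd : σ.PosDef :=
      Matrix.posDef_diagonal_iff.mpr fun i => Complex.zero_lt_real.mpr (hrpos i)
    rw [hpinch]
    set ω : Matrix (Fin n) (Fin n) ℂ := (a : ℂ) • ρ + (b : ℂ) • σ with hω_def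
    have hab : (a : ℂ) + (b : ℂ) = 1 := by
      rw [hb_def]; push_cast; ring
    have hωpd : ω.PosDef := by
      refine Matrix.posDef_iff_dotProduct_mulVec.mpr ⟨?_, ?_⟩
      · show ω.conjTranspose = ω
        rw [hω_def, Matrix.conjTranspose_add, Matrix.conjTranspose_smul,
          Matrix.conjTranspose_smul, hρ.1, hσpd.1]
        rw [show star ((a:ℝ):ℂ) = ((a:ℝ):ℂ) from Complex.conj_ofReal a,
          show star ((b:ℝ):ℂ) = ((b:ℝ):ℂ) from Complex.conj_ofReal b]
      · intro x hx
        have hval : dotProduct (star x) (ω.mulVec x)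
            = (a:ℂ) * dotProduct (star x) (ρ.mulVec x)
              + (b:ℂ) * dotProduct (star x) (σ.mulVec x) := by
          rw [hω_def, Matrix.add_mulVec, Matrix.smul_mulVec, Matrix.smul_mulVec,
            dotProduct_add, dotProduct_smul, dotProduct_smul, smul_eq_mul, smul_eq_mul]
        rw [hval]
        exact add_pos_of_pos_of_nonneg
          (mul_pos (Complex.zero_lt_real.mpr ha0) ((Matrix.posDef_iff_dotProduct_mulVec.mp hρ).2 hx))
          (mul_nonneg (Complex.zero_le_real.mpr hb0) (hσpd.posSemidef.dotProduct_mulVec_nonneg x))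
    have htrσ : σ.trace = 1 := by
      rw [hσ_def, Matrix.trace_diagonal]
      rw [show (∑ i, ((r i : ℝ) : ℂ)) = ∑ i, ρ i i from
        Finset.sum_congr rfl fun i _ => (hdiag i).symm]
      exact htr
    have htrω : ω.trace = 1 := by
      rw [hω_def, Matrix.trace_add, Matrix.trace_smul, Matrix.trace_smul, htr, htrσ,
        smul_eq_mul, smul_eq_mul, mul_one, mul_one, hab]
    have hmlσ : matLog σ = Matrix.diagonal (fun i => ((Real.log (r i) : ℝ) : ℂ)) :=
      matLog_diagonal r
    have hσii : ∀ i, σ i i = ρ i i := fun i => by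
      rw [hσ_def, Matrix.diagonal_apply_eq]; exact (hdiag i).symm
    have hωii : ∀ i, ω i i = ρ i i := by
      intro i
      rw [hω_def]
      simp only [Matrix.add_apply, Matrix.smul_apply, smul_eq_mul, hσii i]
      rw [← add_mul, hab, one_mul]
    have hcross : ∀ X : Matrix (Fin n) (Fin n) ℂ, (∀ i, X i i = ρ i i) →
        Matrix.trace (X * matLog σ) = Matrix.trace (σ * matLog σ) := by
      intro X hX
      rw [hmlσ, trace_mul_diagonal, trace_mul_diagonal]
      exact Finset.sum_congr rfl fun i _ => by rw [hX i, ← hσii i]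
    have hlin : Matrix.trace (ω * matLog ω)
        = (a:ℂ) * Matrix.trace (ρ * matLog ω) + (b:ℂ) * Matrix.trace (σ * matLog ω) := by
      rw [show ω * matLog ω = (a:ℂ) • (ρ * matLog ω) + (b:ℂ) • (σ * matLog ω) from by
        rw [hω_def, Matrix.add_mul, Matrix.smul_mul, Matrix.smul_mul]]
      rw [Matrix.trace_add, Matrix.trace_smul, Matrix.trace_smul, smul_eq_mul, smul_eq_mul]
    have hrel : ∀ X Y : Matrix (Fin n) (Fin n) ℂ, relEnt X Y
        = (Matrix.trace (X * matLog X)).re - (Matrix.trace (X * matLog Y)).re := by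
      intro X Y
      rw [relEnt, Matrix.mul_sub, Matrix.trace_sub, Complex.sub_re]
    -- abbreviations
    set Tρρ := (Matrix.trace (ρ * matLog ρ)).re
    set Tρω := (Matrix.trace (ρ * matLog ω)).re
    set Tσω := (Matrix.trace (σ * matLog ω)).re
    set Tωω := (Matrix.trace (ω * matLog ω)).re
    set Sσ := (Matrix.trace (σ * matLog σ)).re
    have hreρ : (Matrix.trace ρ).re = 1 := by rw [htr]; exact Complex.one_re
    have hreσ : (Matrix.trace σ).re = 1 := by rw [htrσ]; exact Complex.one_re
    have hreω : (Matrix.trace ω).re = 1 := by rw [htrω]; exact Complex.one_re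
    have k1 := klein hρ hωpd
    have k2 := klein hσpd hωpd
    rw [hreρ, hreω] at k1
    rw [hreσ, hreω] at k2
    have E1 : relEnt ω σ = Tωω - Sσ := by
      rw [hrel ω σ]
      have := congrArg Complex.re (hcross ω hωii)
      rw [this]
    have E2 : relEnt ρ σ = Tρρ - Sσ := by
      rw [hrel ρ σ]
      have := congrArg Complex.re (hcross ρ (fun _ => rfl))
      rw [this]
    have E3 : Tωω = a * Tρω + b * Tσω := by
      have := congrArg Complex.re hlin
      rwa [Complex.add_re, Complex.re_ofReal_mul, Complex.re_ofReal_mul] at this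
    rw [E1, E2]
    have m1 : a * Tρω ≤ a * Tρρ := mul_le_mul_of_nonneg_left (by linarith) ha0.le
    have m2 : b * Tσω ≤ b * Sσ := mul_le_mul_of_nonneg_left (by linarith) hb0
    have expand : a * (Tρρ - Sσ) = a * Tρρ - a * Sσ := by ring
    have e2 : b * Sσ = Sσ - a * Sσ := by rw [hb_def]; ring
    linarith [m1, m2, E3, expand, e2]
end

section
/- Let H = ℂ^a ⊗ ℂ^b ⊗ ℂ^r be a tripartite finite-dimensional space (matrices on H indexed by a×b×r via Kronecker products), σ a positive definite density matrix on H, P a matrix on ℂ^r with 0 ≤ P ≤ 1 and Tr[(1⊗1⊗P)σ] > 0, and ε ≥ 0. For a positive semidefinite Q on H with Tr[Qσ] > 0, write σ^Q := Q^{1/2}·σ·Q^{1/2} / Tr[Qσ]. Assume: for every positive semidefinite N on ℂ^a and all P_B, P'_B on ℂ^b with 0 ≤ P_B ≤ 1, 0 ≤ P'_B ≤ 1, Tr[(1⊗P_B⊗P)σ] > 0 and Tr[(1⊗P'_B⊗P)σ] > 0, one has |Tr[σ^{1⊗P_B⊗P}(N⊗1⊗1)] − Tr[σ^{1⊗P'_B⊗P}(N⊗1⊗1)]|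 ≤ ε·Tr[σ^{1⊗P'_B⊗P}(N⊗1⊗1)]. Then, writing τ := σ^{1⊗1⊗P}, for all Hermitian X on ℂ^a and Y on ℂ^b: |Tr[τ(X⊗Y⊗1)] − Tr[τ(X⊗1⊗1)]·Tr[τ(1⊗Y⊗1)]| ≤ 4ε·(Tr[τ(X²⊗1⊗1)])^{1/2}·(Tr[τ(1⊗Y²⊗1)])^{1/2}. -/
open scoped Matrix.Norms.L2Operator ComplexOrder Matrix Kronecker

/-- The positive semidefinite square root of a positive semidefinite matrix
(the definition `Matrix.PosSemidef.sqrt` of the older Mathlib, since removed). -/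
noncomputable def Matrix.PosSemidef.sqrt {n : Type*} [Fintype n] [DecidableEq n]
    {𝕜 : Type*} [RCLike 𝕜] {A : Matrix n n 𝕜} (hA : A.PosSemidef) : Matrix n n 𝕜 :=
  hA.1.eigenvectorUnitary.1 * Matrix.diagonal ((↑) ∘ (√·) ∘ hA.1.eigenvalues) *
  (star hA.1.eigenvectorUnitary : Matrix n n 𝕜)

open Classical in
/-- The post-selected state `σ^Q = Q^{1/2} σ Q^{1/2} / Tr[Q σ]` after a test `Q`
(with junk value `0` if `Q` is not positive semidefinite). -/
noncomputable def postSelect {ι : Type*} [Fintype ι] [DecidableEq ι]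
    (σ Q : Matrix ι ι ℂ) : Matrix ι ι ℂ :=
  if hQ : Q.PosSemidef then (Matrix.trace (Q * σ))⁻¹ • (hQ.sqrt * σ * hQ.sqrt) else 0

namespace QL2Aux

open Matrix

set_option linter.unusedSectionVars false

variable {m n : Type*} [Fintype m] [Fintype n] [DecidableEq m] [DecidableEq n]

open MatrixOrder in
lemma psd_sqrt_eq_cfc {A : Matrix m m ℂ} (hA : A.PosSemidef) : hA.sqrt = CFC.sqrt A := by
  rw [CFC.sqrt_eq_cfc, cfc_nnreal_eq_real _ A hA.nonneg, hA.1.cfc_eq]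
  simp only [IsHermitian.cfc, Matrix.PosSemidef.sqrt, Unitary.conjStarAlgAut_apply]
  congr 2
  ext i k
  simp only [diagonal_apply, Function.comp_apply, Real.coe_sqrt, Real.coe_toNNReal']
  rw [max_eq_left (hA.eigenvalues_nonneg _)]

open MatrixOrder in
lemma psd_posSemidef_sqrt {A : Matrix m m ℂ} (hA : A.PosSemidef) : hA.sqrt.PosSemidef := by
  rw [psd_sqrt_eq_cfc]; exact (CFC.sqrt_nonneg A).posSemidef

open MatrixOrder in
lemma psd_sqrt_mul_self {A : Matrix m m ℂ} (hA : A.PosSemidef) : hA.sqrt * hA.sqrt = A := by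
  rw [psd_sqrt_eq_cfc]; exact CFC.sqrt_mul_sqrt_self A hA.nonneg

open MatrixOrder in
lemma psd_eq_sqrt_of_sq_eq {A B : Matrix m m ℂ} (hB : B.PosSemidef) (hA : A.PosSemidef)
    (h : B ^ 2 = A) : B = hA.sqrt := by
  rw [psd_sqrt_eq_cfc, ← h, CFC.sqrt_sq B hB.nonneg]

lemma kron_conjTranspose (A : Matrix m m ℂ) (B : Matrix n n ℂ) :
    (A ⊗ₖ B)ᴴ = Aᴴ ⊗ₖ Bᴴ := by
  ext ⟨i, j⟩ ⟨k, l⟩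
  simp [conjTranspose_apply, mul_comm]

lemma posSemidef_kron {A : Matrix m m ℂ} {B : Matrix n n ℂ}
    (hA : A.PosSemidef) (hB : B.PosSemidef) : (A ⊗ₖ B).PosSemidef := by
  exact hA.kronecker hB

lemma sqrt_kron {A : Matrix m m ℂ} {B : Matrix n n ℂ}
    (hA : A.PosSemidef) (hB : B.PosSemidef) (hAB : (A ⊗ₖ B).PosSemidef) :
    hAB.sqrt = hA.sqrt ⊗ₖ hB.sqrt :=
  (psd_eq_sqrt_of_sq_eq (posSemidef_kron (psd_posSemidef_sqrt hA) (psd_posSemidef_sqrt hB)) hAB (by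
    rw [pow_two, ← mul_kronecker_mul, psd_sqrt_mul_self hA, psd_sqrt_mul_self hB])).symm

lemma sqrt_one (h1 : (1 : Matrix m m ℂ).PosSemidef) : h1.sqrt = (1 : Matrix m m ℂ) :=
  (psd_eq_sqrt_of_sq_eq Matrix.PosSemidef.one h1 (one_pow 2)).symm

lemma trace_mul_herm_real {A B : Matrix m m ℂ}
    (hA : A.IsHermitian) (hB : B.IsHermitian) :
    ((Matrix.trace (A * B)).re : ℂ) = Matrix.trace (A * B) := by
  rw [← Complex.conj_eq_iff_re]
  calc (starRingEnd ℂ) (Matrix.trace (A * B)) = Matrix.trace ((A * B)ᴴ) :=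
        (trace_conjTranspose _).symm
    _ = Matrix.trace (A * B) := by
        rw [conjTranspose_mul, hA.eq, hB.eq, trace_mul_comm]

lemma psd_diag_re_nonneg {A : Matrix m m ℂ} (hA : A.PosSemidef) (i : m) :
    0 ≤ (A i i).re := by
  have h := hA.dotProduct_mulVec_nonneg (Pi.single i 1)
  rw [Complex.le_def] at h
  have e : star (Pi.single i 1 : m → ℂ) ⬝ᵥ A *ᵥ Pi.single i 1 = A i i := by
    simp [dotProduct, mulVec, Pi.single_apply, Finset.sum_ite_eq]
  rw [e] at h
  simpa using h.1

lemma psd_trace_re_nonneg {A : Matrix m m ℂ} (hA : A.PosSemidef) :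
    0 ≤ (Matrix.trace A).re := by
  rw [Matrix.trace, Complex.re_sum]
  exact Finset.sum_nonneg fun i _ => psd_diag_re_nonneg hA i

lemma trace_mul_psd_nonneg {A B : Matrix m m ℂ}
    (hA : A.PosSemidef) (hB : B.PosSemidef) : 0 ≤ (Matrix.trace (A * B)).re := by
  obtain ⟨C, rfl⟩ : ∃ C, B = Cᴴ * C :=
    ⟨hB.sqrt, by rw [(psd_posSemidef_sqrt hB).1.eq, psd_sqrt_mul_self]⟩
  rw [← mul_assoc, trace_mul_comm, ← mul_assoc]
  exact psd_trace_re_nonneg (hA.mul_mul_conjTranspose_same C)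

lemma trace_mul_posDef_pos {A M : Matrix m m ℂ} (hA : A.PosDef)
    (hM : M.PosSemidef) (hM0 : M ≠ 0) : 0 < (Matrix.trace (M * A)).re := by
  set S := hM.sqrt with hSdef
  have hS := psd_posSemidef_sqrt hM
  have hSne : S ≠ 0 := fun h => hM0 (by rw [← psd_sqrt_mul_self hM, ← hSdef, h, mul_zero])
  obtain ⟨i, k, hik⟩ : ∃ i k, S i k ≠ 0 := by
    by_contra h
    push_neg at h
    exact hSne (Matrix.ext h)
  have key : Matrix.trace (M * A) = Matrix.trace (S * A * S) := by
    have : M * A = S * (S * A) := by rw [← mul_assoc, psd_sqrt_mul_self hM]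
    rw [this, trace_mul_comm]
  have hpsd : (S * A * S).PosSemidef := by
    have := hA.posSemidef.mul_mul_conjTranspose_same S
    rwa [hS.1.eq] at this
  rw [key, Matrix.trace, Complex.re_sum]
  have hterm : ∀ j, 0 ≤ ((S * A * S) j j).re := fun j => psd_diag_re_nonneg hpsd j
  have hi : 0 < ((S * A * S) k k).re := by
    set x : m → ℂ := fun j => S j k with hxdef
    have hx : x ≠ 0 := fun h => hik (congrFun h i)
    have hlt := hA.dotProduct_mulVec_pos hx
    rw [Complex.lt_def] at hlt
    have hstar : ∀ u v, star (S u v) = S v u := fun u v => by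
      rw [← conjTranspose_apply, hS.1.eq]
    have e : star x ⬝ᵥ A *ᵥ x = (S * A * S) k k := by
      simp only [dotProduct, mulVec, Matrix.mul_apply, Pi.star_apply, hxdef, hstar,
        Finset.mul_sum, Finset.sum_mul]
      rw [Finset.sum_comm]
      refine Finset.sum_congr rfl fun p _ => Finset.sum_congr rfl fun q _ => by ring
    rw [e] at hlt
    simpa using hlt.1
  calc (0:ℝ) < ((S * A * S) k k).re := hi
    _ ≤ ∑ j, ((S * A * S) j j).re := by
        exact Finset.single_le_sum (f := fun j => ((S * A * S) j j).re)
          (fun j _ => hterm j) (Finset.mem_univ k)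

section Proj

variable {X : Matrix m m ℂ}

/-- Spectral projection of a Hermitian matrix onto the `j`-th eigenvector. -/
noncomputable def projOf {m : Type*} [Fintype m] [DecidableEq m] {X : Matrix m m ℂ}
    (hX : X.IsHermitian) (j : m) : Matrix m m ℂ :=
  (hX.eigenvectorUnitary : Matrix m m ℂ) * Matrix.diagonal (Pi.single j 1) *
    star (hX.eigenvectorUnitary : Matrix m m ℂ)

lemma projOf_posSemidef (hX : X.IsHermitian) (j : m) : (projOf hX j).PosSemidef := by
  have hd : (Matrix.diagonal (Pi.single j 1 : m → ℂ)).PosSemidef := by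
    rw [posSemidef_diagonal_iff]
    intro i
    rcases eq_or_ne i j with h | h <;> simp [Pi.single_apply, h]
  have := hd.mul_mul_conjTranspose_same (hX.eigenvectorUnitary : Matrix m m ℂ)
  rwa [projOf, star_eq_conjTranspose]

lemma mul_star_eigen (hX : X.IsHermitian) : (hX.eigenvectorUnitary : Matrix m m ℂ) *
    star (hX.eigenvectorUnitary : Matrix m m ℂ) = 1 :=
  (Matrix.mem_unitaryGroup_iff).mp (hX.eigenvectorUnitary).2

lemma star_mul_eigen (hX : X.IsHermitian) : star (hX.eigenvectorUnitary : Matrix m m ℂ) *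
    (hX.eigenvectorUnitary : Matrix m m ℂ) = 1 :=
  (Matrix.mem_unitaryGroup_iff').mp (hX.eigenvectorUnitary).2

lemma one_sub_projOf_posSemidef (hX : X.IsHermitian) (j : m) :
    (1 - projOf hX j).PosSemidef := by
  have hd : (Matrix.diagonal (fun i => 1 - (Pi.single j 1 : m → ℂ) i)).PosSemidef := by
    rw [posSemidef_diagonal_iff]
    intro i
    rcases eq_or_ne i j with h | h <;> simp [Pi.single_apply, h]
  have e : Matrix.diagonal (fun i => 1 - (Pi.single j 1 : m → ℂ) i)
      = 1 - Matrix.diagonal (Pi.single j 1) := by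
    ext i k
    rcases eq_or_ne i k with rfl | h
    · simp [Matrix.diagonal_apply, Matrix.one_apply]
    · simp [Matrix.diagonal_apply, Matrix.one_apply, h]
  have key : 1 - projOf hX j = (hX.eigenvectorUnitary : Matrix m m ℂ) *
      Matrix.diagonal (fun i => 1 - (Pi.single j 1 : m → ℂ) i) *
      star (hX.eigenvectorUnitary : Matrix m m ℂ) := by
    rw [projOf, e, mul_sub, mul_one, sub_mul, mul_star_eigen]
  rw [key]
  have := hd.mul_mul_conjTranspose_same (hX.eigenvectorUnitary : Matrix m m ℂ)
  rwa [← star_eq_conjTranspose] at this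

lemma projOf_ne_zero (hX : X.IsHermitian) (j : m) : projOf hX j ≠ 0 := by
  intro h
  have key : Matrix.diagonal (Pi.single j 1 : m → ℂ) =
      star (hX.eigenvectorUnitary : Matrix m m ℂ) * projOf hX j *
      (hX.eigenvectorUnitary : Matrix m m ℂ) := by
    rw [projOf, ← mul_assoc, ← mul_assoc, star_mul_eigen, one_mul, mul_assoc,
      star_mul_eigen, mul_one]
  rw [h, mul_zero, zero_mul] at key
  have := congrFun (congrFun key j) j
  simp at this

lemma weighted_sum_projOf (hX : X.IsHermitian) (g : m → ℝ) :
    ∑ j, (g j : ℂ) • projOf hX j = (hX.eigenvectorUnitary : Matrix m m ℂ) *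
      Matrix.diagonal (fun i => (g i : ℂ)) * star (hX.eigenvectorUnitary : Matrix m m ℂ) := by
  have key : Matrix.diagonal (fun i => (g i : ℂ)) =
      ∑ j, (g j : ℂ) • Matrix.diagonal (Pi.single j 1 : m → ℂ) := by
    ext i k
    simp only [Matrix.sum_apply, Matrix.smul_apply, Matrix.diagonal_apply, Pi.single_apply,
      smul_eq_mul]
    rcases eq_or_ne i k with h | h
    · subst h
      simp [Finset.sum_ite_eq', mul_ite]
    · simp [h]
  rw [key, Finset.mul_sum, Finset.sum_mul]
  refine Finset.sum_congr rfl fun j _ => ?_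
  rw [projOf, Matrix.mul_smul, Matrix.smul_mul]

lemma sum_projOf (hX : X.IsHermitian) : ∑ j, projOf hX j = 1 := by
  have := weighted_sum_projOf hX (fun _ => 1)
  simp only [Complex.ofReal_one, one_smul] at this
  rw [this, diagonal_one, mul_one, mul_star_eigen]

lemma eigen_sum_projOf (hX : X.IsHermitian) :
    ∑ j, (hX.eigenvalues j : ℂ) • projOf hX j = X := by
  rw [weighted_sum_projOf hX hX.eigenvalues]
  have h := hX.spectral_theorem
  rw [Unitary.conjStarAlgAut_apply] at h
  exact h.symm

lemma eigen_sq_sum_projOf (hX : X.IsHermitian) :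
    ∑ j, ((hX.eigenvalues j ^ 2 : ℝ) : ℂ) • projOf hX j = X * X := by
  rw [weighted_sum_projOf hX (fun j => hX.eigenvalues j ^ 2)]
  conv_rhs => rw [hX.spectral_theorem]
  simp only [Unitary.conjStarAlgAut_apply]
  set U := (hX.eigenvectorUnitary : Matrix m m ℂ) with hU
  set D := Matrix.diagonal (RCLike.ofReal ∘ hX.eigenvalues : m → ℂ) with hD
  simp only [mul_assoc]
  rw [show star U * (U * (D * star U)) = D * star U by
    rw [← mul_assoc, star_mul_eigen, one_mul]]
  rw [show D * (D * star U) = (D * D) * star U from (mul_assoc _ _ _).symm]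
  rw [hD, diagonal_mul_diagonal]
  congr 2
  ext i
  simp [Function.comp, pow_two]

end Proj

section Red

variable {m n : Type*} [Fintype m] [Fintype n] [DecidableEq m] [DecidableEq n]

lemma sum_smul_kron {ι : Type*} (s : Finset ι) (c : ι → ℂ) (W : ι → Matrix m m ℂ)
    (B : Matrix n n ℂ) :
    (∑ j ∈ s, c j • W j) ⊗ₖ B = ∑ j ∈ s, c j • (W j ⊗ₖ B) := by
  ext ⟨i, k⟩ ⟨i', k'⟩
  simp [Matrix.sum_apply, Finset.sum_mul, mul_assoc]

lemma kron_sum_smul {ι : Type*} (s : Finset ι) (c : ι → ℂ) (A : Matrix m m ℂ)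
    (V : ι → Matrix n n ℂ) :
    A ⊗ₖ (∑ j ∈ s, c j • V j) = ∑ j ∈ s, c j • (A ⊗ₖ V j) := by
  ext ⟨i, k⟩ ⟨i', k'⟩
  simp [Matrix.sum_apply, Finset.mul_sum]
  exact Finset.sum_congr rfl fun j _ => by ring

lemma trace_mul_sum_smul {ι : Type*} (σ : Matrix m m ℂ) (s : Finset ι) (c : ι → ℂ)
    (M : ι → Matrix m m ℂ) :
    Matrix.trace (σ * ∑ j ∈ s, c j • M j) = ∑ j ∈ s, c j * Matrix.trace (σ * M j) := by
  rw [Matrix.mul_sum, Matrix.trace_sum]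
  exact Finset.sum_congr rfl fun j _ => by rw [Matrix.mul_smul, Matrix.trace_smul, smul_eq_mul]

lemma trace_postSelect_mul (σ : Matrix m m ℂ) {Q M : Matrix m m ℂ} (hQ : Q.PosSemidef)
    (hcomm : hQ.sqrt * M = M * hQ.sqrt) :
    Matrix.trace (postSelect σ Q * M)
      = (Matrix.trace (Q * σ))⁻¹ * Matrix.trace (σ * (M * Q)) := by
  rw [postSelect, dif_pos hQ, Matrix.smul_mul, Matrix.trace_smul, smul_eq_mul]
  congr 1
  calc Matrix.trace (hQ.sqrt * σ * hQ.sqrt * M)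
      = Matrix.trace (hQ.sqrt * (σ * (hQ.sqrt * M))) := by simp only [mul_assoc]
    _ = Matrix.trace ((σ * (hQ.sqrt * M)) * hQ.sqrt) := trace_mul_comm _ _
    _ = Matrix.trace (σ * (M * Q)) := by
        rw [hcomm]
        simp only [mul_assoc, psd_sqrt_mul_self hQ]

end Red

section Tri

variable {a b r : ℕ}
  (σ : Matrix (Fin a × Fin b × Fin r) (Fin a × Fin b × Fin r) ℂ)
  {P : Matrix (Fin r) (Fin r) ℂ}

lemma trace_postSelect_kron (hP : P.PosSemidef)
    {V : Matrix (Fin b) (Fin b) ℂ} (hV : V.PosSemidef)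
    (W : Matrix (Fin a) (Fin a) ℂ) (M : Matrix (Fin b) (Fin b) ℂ)
    (hMV : hV.sqrt * M = M * hV.sqrt) :
    Matrix.trace (postSelect σ ((1 : Matrix (Fin a) (Fin a) ℂ) ⊗ₖ (V ⊗ₖ P)) *
        (W ⊗ₖ (M ⊗ₖ (1 : Matrix (Fin r) (Fin r) ℂ))))
      = (Matrix.trace (((1 : Matrix (Fin a) (Fin a) ℂ) ⊗ₖ (V ⊗ₖ P)) * σ))⁻¹ *
        Matrix.trace (σ * (W ⊗ₖ ((M * V) ⊗ₖ P))) := by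
  have hQ : ((1 : Matrix (Fin a) (Fin a) ℂ) ⊗ₖ (V ⊗ₖ P)).PosSemidef :=
    posSemidef_kron Matrix.PosSemidef.one (posSemidef_kron hV hP)
  have hsqrt : hQ.sqrt = (1 : Matrix (Fin a) (Fin a) ℂ) ⊗ₖ (hV.sqrt ⊗ₖ hP.sqrt) := by
    rw [sqrt_kron Matrix.PosSemidef.one (posSemidef_kron hV hP) hQ,
      sqrt_kron hV hP (posSemidef_kron hV hP), sqrt_one]
  have hcomm : hQ.sqrt * (W ⊗ₖ (M ⊗ₖ (1 : Matrix (Fin r) (Fin r) ℂ)))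
      = (W ⊗ₖ (M ⊗ₖ (1 : Matrix (Fin r) (Fin r) ℂ))) * hQ.sqrt := by
    rw [hsqrt, ← mul_kronecker_mul, ← mul_kronecker_mul, ← mul_kronecker_mul,
      ← mul_kronecker_mul, one_mul, mul_one, one_mul, mul_one, hMV]
  rw [trace_postSelect_mul σ hQ hcomm]
  congr 2
  rw [← mul_kronecker_mul, ← mul_kronecker_mul, mul_one, one_mul]

end Tri

end QL2Aux

open QL2Aux Matrix

/-- (Implication (qIIId) ⇒ (qL₂⁽⁰⁾), one fixed configuration.)
On a tripartite space `ℂ^a ⊗ ℂ^b ⊗ ℂ^r`, if the post-selected states of `σ` satisfy the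
quantum Dobrushin–Shlosman condition with constant `ε` relative to the boundary test `P`
on the third factor, then the GNS covariance of `X ⊗ 1 ⊗ 1` and `1 ⊗ Y ⊗ 1` in the state
`τ = σ^{1⊗1⊗P}` is bounded by `4ε` times the product of the GNS norms of `X` and `Y`. -/
theorem qIIId_implies_qL2GNS {a b r : ℕ} (ε : ℝ) (hε : 0 ≤ ε)
    (σ : Matrix (Fin a × Fin b × Fin r) (Fin a × Fin b × Fin r) ℂ)
    (hσ : σ.PosDef) (hσtr : σ.trace = 1)
    (P : Matrix (Fin r) (Fin r) ℂ)
    (hP0 : P.PosSemidef) (hP1 : (1 - P).PosSemidef)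
    (hPσ : 0 < (Matrix.trace
      (((1 : Matrix (Fin a) (Fin a) ℂ) ⊗ₖ ((1 : Matrix (Fin b) (Fin b) ℂ) ⊗ₖ P)) * σ)).re)
    (hyp : ∀ N : Matrix (Fin a) (Fin a) ℂ, N.PosSemidef →
      ∀ PB PB' : Matrix (Fin b) (Fin b) ℂ,
        PB.PosSemidef → (1 - PB).PosSemidef → PB'.PosSemidef → (1 - PB').PosSemidef →
        0 < (Matrix.trace (((1 : Matrix (Fin a) (Fin a) ℂ) ⊗ₖ (PB ⊗ₖ P)) * σ)).re →
        0 < (Matrix.trace (((1 : Matrix (Fin a) (Fin a) ℂ) ⊗ₖ (PB' ⊗ₖ P)) * σ)).re →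
        |(Matrix.trace (postSelect σ ((1 : Matrix (Fin a) (Fin a) ℂ) ⊗ₖ (PB ⊗ₖ P)) *
              (N ⊗ₖ ((1 : Matrix (Fin b) (Fin b) ℂ) ⊗ₖ (1 : Matrix (Fin r) (Fin r) ℂ))))).re -
          (Matrix.trace (postSelect σ ((1 : Matrix (Fin a) (Fin a) ℂ) ⊗ₖ (PB' ⊗ₖ P)) *
              (N ⊗ₖ ((1 : Matrix (Fin b) (Fin b) ℂ) ⊗ₖ (1 : Matrix (Fin r) (Fin r) ℂ))))).re| ≤
          ε * (Matrix.trace (postSelect σ ((1 : Matrix (Fin a) (Fin a) ℂ) ⊗ₖ (PB' ⊗ₖ P)) *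
              (N ⊗ₖ ((1 : Matrix (Fin b) (Fin b) ℂ) ⊗ₖ (1 : Matrix (Fin r) (Fin r) ℂ))))).re) :
    ∀ X : Matrix (Fin a) (Fin a) ℂ, X.IsHermitian →
    ∀ Y : Matrix (Fin b) (Fin b) ℂ, Y.IsHermitian →
      |(Matrix.trace (postSelect σ
            ((1 : Matrix (Fin a) (Fin a) ℂ) ⊗ₖ ((1 : Matrix (Fin b) (Fin b) ℂ) ⊗ₖ P)) *
            (X ⊗ₖ (Y ⊗ₖ (1 : Matrix (Fin r) (Fin r) ℂ))))).re -
        (Matrix.trace (postSelect σ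
            ((1 : Matrix (Fin a) (Fin a) ℂ) ⊗ₖ ((1 : Matrix (Fin b) (Fin b) ℂ) ⊗ₖ P)) *
            (X ⊗ₖ ((1 : Matrix (Fin b) (Fin b) ℂ) ⊗ₖ (1 : Matrix (Fin r) (Fin r) ℂ))))).re *
        (Matrix.trace (postSelect σ
            ((1 : Matrix (Fin a) (Fin a) ℂ) ⊗ₖ ((1 : Matrix (Fin b) (Fin b) ℂ) ⊗ₖ P)) *
            ((1 : Matrix (Fin a) (Fin a) ℂ) ⊗ₖ (Y ⊗ₖ (1 : Matrix (Fin r) (Fin r) ℂ))))).re| ≤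
      4 * ε *
        Real.sqrt (Matrix.trace (postSelect σ
            ((1 : Matrix (Fin a) (Fin a) ℂ) ⊗ₖ ((1 : Matrix (Fin b) (Fin b) ℂ) ⊗ₖ P)) *
            ((X * X) ⊗ₖ ((1 : Matrix (Fin b) (Fin b) ℂ) ⊗ₖ (1 : Matrix (Fin r) (Fin r) ℂ))))).re *
        Real.sqrt (Matrix.trace (postSelect σ
            ((1 : Matrix (Fin a) (Fin a) ℂ) ⊗ₖ ((1 : Matrix (Fin b) (Fin b) ℂ) ⊗ₖ P)) *
            ((1 : Matrix (Fin a) (Fin a) ℂ) ⊗ₖ ((Y * Y) ⊗ₖ (1 : Matrix (Fin r) (Fin r) ℂ))))).re := by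
  intro X hX Y hY
  -- nonemptiness and nonzero facts
  have hne : Nonempty (Fin a × Fin b × Fin r) := by
    by_contra h
    rw [not_nonempty_iff] at h
    rw [Matrix.trace_eq_zero_of_isEmpty] at hPσ
    simp at hPσ
  obtain ⟨⟨ia, ib, ir⟩⟩ := hne
  have h1bne : (1 : Matrix (Fin b) (Fin b) ℂ) ≠ 0 := by
    intro h
    simpa [Matrix.one_apply] using congrFun (congrFun h ib) ib
  have hPne : P ≠ 0 := by
    rintro rfl
    rw [Matrix.kronecker_zero, Matrix.kronecker_zero, Matrix.zero_mul] at hPσ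
    simp at hPσ
  obtain ⟨kp, lp, hPkl⟩ : ∃ k l, P k l ≠ 0 := by
    by_contra h; push_neg at h; exact hPne (Matrix.ext h)
  -- abbreviations
  set R : Fin a → Matrix (Fin a) (Fin a) ℂ := projOf hX with hR
  set Qp : Fin b → Matrix (Fin b) (Fin b) ℂ := projOf hY with hQp
  set x : Fin a → ℝ := hX.eigenvalues with hxv
  set y : Fin b → ℝ := hY.eigenvalues with hyv
  set F : Matrix (Fin a) (Fin a) ℂ → Matrix (Fin b) (Fin b) ℂ → ℝ :=
    fun W V => (Matrix.trace (σ * (W ⊗ₖ (V ⊗ₖ P)))).re with hFdef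
  -- realness of normalizing traces
  have hTreal : ∀ V : Matrix (Fin b) (Fin b) ℂ, V.PosSemidef →
      Matrix.trace (((1 : Matrix (Fin a) (Fin a) ℂ) ⊗ₖ (V ⊗ₖ P)) * σ) = ((F 1 V : ℝ) : ℂ) := by
    intro V hV
    have hherm : ((1 : Matrix (Fin a) (Fin a) ℂ) ⊗ₖ (V ⊗ₖ P)).IsHermitian :=
      (posSemidef_kron Matrix.PosSemidef.one (posSemidef_kron hV hP0)).1
    rw [trace_mul_comm]
    exact (trace_mul_herm_real hσ.1 hherm).symm
  -- positivity of normalizing traces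
  have hFpos : ∀ V : Matrix (Fin b) (Fin b) ℂ, V.PosSemidef → V ≠ 0 →
      0 < (Matrix.trace (((1 : Matrix (Fin a) (Fin a) ℂ) ⊗ₖ (V ⊗ₖ P)) * σ)).re := by
    intro V hV hVne
    apply trace_mul_posDef_pos hσ
      (posSemidef_kron Matrix.PosSemidef.one (posSemidef_kron hV hP0))
    obtain ⟨iv, jv, hvij⟩ : ∃ i j, V i j ≠ 0 := by
      by_contra h; push_neg at h; exact hVne (Matrix.ext h)
    intro h0
    have := congrFun (congrFun h0 (ia, iv, kp)) (ia, jv, lp)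
    simp [Matrix.kroneckerMap_apply, Matrix.one_apply, hvij, hPkl] at this
  have hFpos' : ∀ V : Matrix (Fin b) (Fin b) ℂ, V.PosSemidef → V ≠ 0 → 0 < F 1 V := by
    intro V hV hVne
    have h := hFpos V hV hVne
    rwa [trace_mul_comm] at h
  have hZpos : 0 < F 1 1 := hFpos' 1 Matrix.PosSemidef.one h1bne
  have hZne : F 1 1 ≠ 0 := ne_of_gt hZpos
  -- reduction of post-selected traces
  have hred : ∀ (V : Matrix (Fin b) (Fin b) ℂ) (hV : V.PosSemidef), V ≠ 0 →
      ∀ (W : Matrix (Fin a) (Fin a) ℂ) (M : Matrix (Fin b) (Fin b) ℂ),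
      hV.sqrt * M = M * hV.sqrt →
      (Matrix.trace (postSelect σ ((1 : Matrix (Fin a) (Fin a) ℂ) ⊗ₖ (V ⊗ₖ P)) *
          (W ⊗ₖ (M ⊗ₖ (1 : Matrix (Fin r) (Fin r) ℂ))))).re = F W (M * V) / F 1 V := by
    intro V hV hVne W M hMV
    rw [trace_postSelect_kron σ hP0 hV W M hMV, hTreal V hV, ← Complex.ofReal_inv,
      Complex.re_ofReal_mul, div_eq_inv_mul]
  have hsqrt1 : ∀ M : Matrix (Fin b) (Fin b) ℂ,
      (Matrix.PosSemidef.one (n := Fin b) (R := ℂ)).sqrt * M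
        = M * (Matrix.PosSemidef.one (n := Fin b) (R := ℂ)).sqrt := by
    intro M
    rw [sqrt_one Matrix.PosSemidef.one, one_mul, mul_one]
  -- rewrite the five postSelect traces in the goal
  have e1 := hred 1 Matrix.PosSemidef.one h1bne X Y (hsqrt1 Y)
  have e2 := hred 1 Matrix.PosSemidef.one h1bne X 1 (hsqrt1 1)
  have e3 := hred 1 Matrix.PosSemidef.one h1bne 1 Y (hsqrt1 Y)
  have e4 := hred 1 Matrix.PosSemidef.one h1bne (X * X) 1 (hsqrt1 1)
  have e5 := hred 1 Matrix.PosSemidef.one h1bne 1 (Y * Y) (hsqrt1 (Y * Y))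
  rw [mul_one] at e1 e2 e3 e4 e5
  rw [e1, e2, e3, e4, e5]
  -- linearity of F
  have hlinL : ∀ (c : Fin a → ℝ) (Wf : Fin a → Matrix (Fin a) (Fin a) ℂ)
      (V : Matrix (Fin b) (Fin b) ℂ),
      F (∑ j, (c j : ℂ) • Wf j) V = ∑ j, c j * F (Wf j) V := by
    intro c Wf V
    show (Matrix.trace (σ * ((∑ j, (c j : ℂ) • Wf j) ⊗ₖ (V ⊗ₖ P)))).re = _
    rw [sum_smul_kron, trace_mul_sum_smul, Complex.re_sum]
    exact Finset.sum_congr rfl fun j _ => Complex.re_ofReal_mul _ _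
  have hlinR : ∀ (c : Fin b → ℝ) (Vf : Fin b → Matrix (Fin b) (Fin b) ℂ)
      (W : Matrix (Fin a) (Fin a) ℂ),
      F W (∑ i, (c i : ℂ) • Vf i) = ∑ i, c i * F W (Vf i) := by
    intro c Vf W
    show (Matrix.trace (σ * (W ⊗ₖ ((∑ i, (c i : ℂ) • Vf i) ⊗ₖ P)))).re = _
    rw [sum_smul_kron, kron_sum_smul, trace_mul_sum_smul, Complex.re_sum]
    exact Finset.sum_congr rfl fun i _ => Complex.re_ofReal_mul _ _
  -- spectral decompositions
  have hXdec : X = ∑ j, (x j : ℂ) • R j := (eigen_sum_projOf hX).symm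
  have hYdec : Y = ∑ i, (y i : ℂ) • Qp i := (eigen_sum_projOf hY).symm
  have hXXdec : X * X = ∑ j, ((x j ^ 2 : ℝ) : ℂ) • R j := (eigen_sq_sum_projOf hX).symm
  have hYYdec : Y * Y = ∑ i, ((y i ^ 2 : ℝ) : ℂ) • Qp i := (eigen_sq_sum_projOf hY).symm
  have hOneA : (1 : Matrix (Fin a) (Fin a) ℂ) = ∑ j, (((1 : ℝ)) : ℂ) • R j := by
    rw [show ∑ j, (((1 : ℝ)) : ℂ) • R j = ∑ j, R j from by simp]
    exact (sum_projOf hX).symm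
  have hOneB : (1 : Matrix (Fin b) (Fin b) ℂ) = ∑ i, (((1 : ℝ)) : ℂ) • Qp i := by
    rw [show ∑ i, (((1 : ℝ)) : ℂ) • Qp i = ∑ i, Qp i from by simp]
    exact (sum_projOf hY).symm
  -- expansions
  have hFX1 : F X 1 = ∑ j, x j * F (R j) 1 := by
    conv_lhs => rw [hXdec]
    exact hlinL x R 1
  have hF1Y : F 1 Y = ∑ i, y i * F 1 (Qp i) := by
    conv_lhs => rw [hYdec]
    exact hlinR y Qp 1
  have hFXY : F X Y = ∑ j, ∑ i, x j * (y i * F (R j) (Qp i)) := by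
    calc F X Y = ∑ j, x j * F (R j) Y := by
          conv_lhs => rw [hXdec]
          exact hlinL x R Y
      _ = ∑ j, ∑ i, x j * (y i * F (R j) (Qp i)) := by
          refine Finset.sum_congr rfl fun j _ => ?_
          rw [show F (R j) Y = ∑ i, y i * F (R j) (Qp i) from by
            conv_lhs => rw [hYdec]
            exact hlinR y Qp (R j)]
          rw [Finset.mul_sum]
  have hFXX : F (X * X) 1 = ∑ j, x j ^ 2 * F (R j) 1 := by
    conv_lhs => rw [hXXdec]
    exact hlinL (fun j => x j ^ 2) R 1
  have hFYY : F 1 (Y * Y) = ∑ i, y i ^ 2 * F 1 (Qp i) := by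
    conv_lhs => rw [hYYdec]
    exact hlinR (fun i => y i ^ 2) Qp 1
  have hsumR : ∑ j, F (R j) 1 = F 1 1 := by
    have h := hlinL (fun _ => (1 : ℝ)) R 1
    rw [← hOneA] at h
    simpa using h.symm
  have hsumQ : ∑ i, F 1 (Qp i) = F 1 1 := by
    have h := hlinR (fun _ => (1 : ℝ)) Qp 1
    rw [← hOneB] at h
    simpa using h.symm
  -- nonnegativity
  have hFR0 : ∀ j, 0 ≤ F (R j) 1 := by
    intro j
    have h := trace_mul_psd_nonneg (posSemidef_kron (projOf_posSemidef hX j)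
      (posSemidef_kron Matrix.PosSemidef.one hP0)) hσ.posSemidef
    rwa [trace_mul_comm] at h
  have hFQ0 : ∀ i, 0 ≤ F 1 (Qp i) := by
    intro i
    have h := trace_mul_psd_nonneg (posSemidef_kron Matrix.PosSemidef.one
      (posSemidef_kron (projOf_posSemidef hY i) hP0)) hσ.posSemidef
    rwa [trace_mul_comm] at h
  have hQpos : ∀ i, 0 < F 1 (Qp i) :=
    fun i => hFpos' (Qp i) (projOf_posSemidef hY i) (projOf_ne_zero hY i)
  -- pairwise Dobrushin-Shlosman estimate
  have hpair : ∀ j i,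
      |F (R j) (Qp i) / F 1 1 - F (R j) 1 / F 1 1 * (F 1 (Qp i) / F 1 1)| ≤
        ε * (F (R j) 1 / F 1 1 * (F 1 (Qp i) / F 1 1)) := by
    intro j i
    have happ := hyp (R j) (projOf_posSemidef hX j) (Qp i) 1 (projOf_posSemidef hY i)
      (one_sub_projOf_posSemidef hY i) Matrix.PosSemidef.one
      (by rw [sub_self]; exact Matrix.PosSemidef.zero)
      (hFpos (Qp i) (projOf_posSemidef hY i) (projOf_ne_zero hY i))
      (hFpos 1 Matrix.PosSemidef.one h1bne)
    rw [hred (Qp i) (projOf_posSemidef hY i) (projOf_ne_zero hY i) (R j) 1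
        (by rw [one_mul, mul_one]),
      hred 1 Matrix.PosSemidef.one h1bne (R j) 1 (hsqrt1 1)] at happ
    simp only [one_mul] at happ
    have hqne : F 1 (Qp i) ≠ 0 := ne_of_gt (hQpos i)
    have key : F (R j) (Qp i) / F 1 1 - F (R j) 1 / F 1 1 * (F 1 (Qp i) / F 1 1)
        = (F 1 (Qp i) / F 1 1) * (F (R j) (Qp i) / F 1 (Qp i) - F (R j) 1 / F 1 1) := by
      field_simp
    have hq0 : 0 ≤ F 1 (Qp i) / F 1 1 := div_nonneg (hQpos i).le hZpos.le
    rw [key, abs_mul, abs_of_nonneg hq0]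
    calc (F 1 (Qp i) / F 1 1) * |F (R j) (Qp i) / F 1 (Qp i) - F (R j) 1 / F 1 1|
        ≤ (F 1 (Qp i) / F 1 1) * (ε * (F (R j) 1 / F 1 1)) :=
          mul_le_mul_of_nonneg_left happ hq0
      _ = ε * (F (R j) 1 / F 1 1 * (F 1 (Qp i) / F 1 1)) := by ring
  -- expansion of the covariance
  have expand : F X Y / F 1 1 - F X 1 / F 1 1 * (F 1 Y / F 1 1)
      = ∑ j, ∑ i, (x j * y i) *
        (F (R j) (Qp i) / F 1 1 - F (R j) 1 / F 1 1 * (F 1 (Qp i) / F 1 1)) := by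
    rw [hFXY, hFX1, hF1Y, Finset.sum_div, div_mul_div_comm, Finset.sum_mul_sum,
      Finset.sum_div, ← Finset.sum_sub_distrib]
    refine Finset.sum_congr rfl fun j _ => ?_
    rw [Finset.sum_div, Finset.sum_div, ← Finset.sum_sub_distrib]
    refine Finset.sum_congr rfl fun i _ => ?_
    field_simp
  -- Cauchy-Schwarz bounds
  have hS1 : ∑ j, |x j| * (F (R j) 1 / F 1 1) ≤ Real.sqrt (F (X * X) 1 / F 1 1) := by
    have ht0 : ∀ j, 0 ≤ F (R j) 1 / F 1 1 := fun j => div_nonneg (hFR0 j) hZpos.le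
    have hsum : ∑ j, F (R j) 1 / F 1 1 = 1 := by
      rw [← Finset.sum_div, hsumR, div_self hZne]
    have hXX0 : 0 ≤ F (X * X) 1 / F 1 1 := by
      apply div_nonneg _ hZpos.le
      rw [hFXX]
      exact Finset.sum_nonneg fun j _ => mul_nonneg (sq_nonneg _) (hFR0 j)
    rw [Real.le_sqrt (Finset.sum_nonneg fun j _ => mul_nonneg (abs_nonneg _) (ht0 j)) hXX0]
    calc (∑ j, |x j| * (F (R j) 1 / F 1 1)) ^ 2
        = (∑ j, (|x j| * Real.sqrt (F (R j) 1 / F 1 1)) * Real.sqrt (F (R j) 1 / F 1 1)) ^ 2 := by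
          congr 1
          exact Finset.sum_congr rfl fun j _ => by
            rw [mul_assoc, Real.mul_self_sqrt (ht0 j)]
      _ ≤ (∑ j, (|x j| * Real.sqrt (F (R j) 1 / F 1 1)) ^ 2) *
          (∑ j, Real.sqrt (F (R j) 1 / F 1 1) ^ 2) :=
          Finset.sum_mul_sq_le_sq_mul_sq Finset.univ _ _
      _ = (∑ j, x j ^ 2 * (F (R j) 1 / F 1 1)) * (∑ j, F (R j) 1 / F 1 1) := by
          congr 1
          · exact Finset.sum_congr rfl fun j _ => by
              rw [mul_pow, sq_abs, Real.sq_sqrt (ht0 j)]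
          · exact Finset.sum_congr rfl fun j _ => Real.sq_sqrt (ht0 j)
      _ = F (X * X) 1 / F 1 1 := by
          rw [hsum, mul_one, hFXX, Finset.sum_div]
          exact Finset.sum_congr rfl fun j _ => (mul_div_assoc _ _ _).symm
  have hS2 : ∑ i, |y i| * (F 1 (Qp i) / F 1 1) ≤ Real.sqrt (F 1 (Y * Y) / F 1 1) := by
    have ht0 : ∀ i, 0 ≤ F 1 (Qp i) / F 1 1 := fun i => div_nonneg (hFQ0 i) hZpos.le
    have hsum : ∑ i, F 1 (Qp i) / F 1 1 = 1 := by
      rw [← Finset.sum_div, hsumQ, div_self hZne]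
    have hYY0 : 0 ≤ F 1 (Y * Y) / F 1 1 := by
      apply div_nonneg _ hZpos.le
      rw [hFYY]
      exact Finset.sum_nonneg fun i _ => mul_nonneg (sq_nonneg _) (hFQ0 i)
    rw [Real.le_sqrt (Finset.sum_nonneg fun i _ => mul_nonneg (abs_nonneg _) (ht0 i)) hYY0]
    calc (∑ i, |y i| * (F 1 (Qp i) / F 1 1)) ^ 2
        = (∑ i, (|y i| * Real.sqrt (F 1 (Qp i) / F 1 1)) * Real.sqrt (F 1 (Qp i) / F 1 1)) ^ 2 := by
          congr 1
          exact Finset.sum_congr rfl fun i _ => by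
            rw [mul_assoc, Real.mul_self_sqrt (ht0 i)]
      _ ≤ (∑ i, (|y i| * Real.sqrt (F 1 (Qp i) / F 1 1)) ^ 2) *
          (∑ i, Real.sqrt (F 1 (Qp i) / F 1 1) ^ 2) :=
          Finset.sum_mul_sq_le_sq_mul_sq Finset.univ _ _
      _ = (∑ i, y i ^ 2 * (F 1 (Qp i) / F 1 1)) * (∑ i, F 1 (Qp i) / F 1 1) := by
          congr 1
          · exact Finset.sum_congr rfl fun i _ => by
              rw [mul_pow, sq_abs, Real.sq_sqrt (ht0 i)]
          · exact Finset.sum_congr rfl fun i _ => Real.sq_sqrt (ht0 i)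
      _ = F 1 (Y * Y) / F 1 1 := by
          rw [hsum, mul_one, hFYY, Finset.sum_div]
          exact Finset.sum_congr rfl fun i _ => (mul_div_assoc _ _ _).symm
  have hS1nn : 0 ≤ ∑ j, |x j| * (F (R j) 1 / F 1 1) :=
    Finset.sum_nonneg fun j _ => mul_nonneg (abs_nonneg _)
      (div_nonneg (hFR0 j) hZpos.le)
  have hS2nn : 0 ≤ ∑ i, |y i| * (F 1 (Qp i) / F 1 1) :=
    Finset.sum_nonneg fun i _ => mul_nonneg (abs_nonneg _)
      (div_nonneg (hFQ0 i) hZpos.le)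
  -- final assembly
  rw [expand]
  calc |∑ j, ∑ i, (x j * y i) *
        (F (R j) (Qp i) / F 1 1 - F (R j) 1 / F 1 1 * (F 1 (Qp i) / F 1 1))|
      ≤ ∑ j, |∑ i, (x j * y i) *
        (F (R j) (Qp i) / F 1 1 - F (R j) 1 / F 1 1 * (F 1 (Qp i) / F 1 1))| :=
        Finset.abs_sum_le_sum_abs _ _
    _ ≤ ∑ j, ∑ i, |(x j * y i) *
        (F (R j) (Qp i) / F 1 1 - F (R j) 1 / F 1 1 * (F 1 (Qp i) / F 1 1))| :=
        Finset.sum_le_sum fun j _ => Finset.abs_sum_le_sum_abs _ _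
    _ ≤ ∑ j, ∑ i, |x j| * |y i| *
        (ε * (F (R j) 1 / F 1 1 * (F 1 (Qp i) / F 1 1))) := by
        refine Finset.sum_le_sum fun j _ => Finset.sum_le_sum fun i _ => ?_
        rw [abs_mul, abs_mul]
        exact mul_le_mul_of_nonneg_left (hpair j i)
          (mul_nonneg (abs_nonneg _) (abs_nonneg _))
    _ = ε * ((∑ j, |x j| * (F (R j) 1 / F 1 1)) * (∑ i, |y i| * (F 1 (Qp i) / F 1 1))) := by
        rw [Finset.sum_mul_sum, Finset.mul_sum]
        refine Finset.sum_congr rfl fun j _ => ?_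
        rw [Finset.mul_sum]
        exact Finset.sum_congr rfl fun i _ => by ring
    _ ≤ ε * (Real.sqrt (F (X * X) 1 / F 1 1) * Real.sqrt (F 1 (Y * Y) / F 1 1)) := by
        apply mul_le_mul_of_nonneg_left _ hε
        exact mul_le_mul hS1 hS2 hS2nn (Real.sqrt_nonneg _)
    _ ≤ 4 * ε * Real.sqrt (F (X * X) 1 / F 1 1) * Real.sqrt (F 1 (Y * Y) / F 1 1) := by
        have h1 : 0 ≤ ε * (Real.sqrt (F (X * X) 1 / F 1 1) * Real.sqrt (F 1 (Y * Y) / F 1 1)) :=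
          mul_nonneg hε (mul_nonneg (Real.sqrt_nonneg _) (Real.sqrt_nonneg _))
        nlinarith [h1]
end
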